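/- arXiv:1305.0535 — 3 statements merged into one kernel-verified Lean document; each statement's English description precedes it below -/
import Mathlib

section
/- Let X be a set and P : Set X → ℝ be a submodular functional, i.e. P(E₁ ∪ E₂) + P(E₁ ∩ E₂) ≤ P(E₁) + P(E₂) for all E₁, E₂ ⊆ X. Fix Ω ⊆ X and suppose E₁ minimizes P over 𝒜₁ := { F : F ∩ Ωᶜ = E₁ ∩ Ωᶜ } and E₂ minimizes P over 𝒜₂ := { F : F ∩ Ωᶜ = E₂ ∩ Ωᶜ }. If E₁ ∩ Ωᶜ ⊆ E₂ ∩ Ωᶜ, then E₁ ∩ E₂ minimizes P over 𝒜₁ and E₁ ∪ E₂ minimizes P over 𝒜₂. -/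
/-- for a submodular set functional `P`, if `E₁, E₂` minimize `P` among sets
with their respective exterior traces and `E₁ ∩ Ωᶜ ⊆ E₂ ∩ Ωᶜ`, then `E₁ ∩ E₂` and
`E₁ ∪ E₂` are again minimizers over the respective classes. -/
theorem stmt4 {X : Type*} (P : Set X → ℝ)
    (hsub : ∀ E₁ E₂ : Set X, P (E₁ ∪ E₂) + P (E₁ ∩ E₂) ≤ P E₁ + P E₂)
    (Ω E₁ E₂ : Set X)
    (hmin1 : ∀ F : Set X, F ∩ Ωᶜ = E₁ ∩ Ωᶜ → P E₁ ≤ P F)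
    (hmin2 : ∀ F : Set X, F ∩ Ωᶜ = E₂ ∩ Ωᶜ → P E₂ ≤ P F)
    (hnest : E₁ ∩ Ωᶜ ⊆ E₂ ∩ Ωᶜ) :
    ((E₁ ∩ E₂) ∩ Ωᶜ = E₁ ∩ Ωᶜ ∧ ∀ F : Set X, F ∩ Ωᶜ = E₁ ∩ Ωᶜ → P (E₁ ∩ E₂) ≤ P F) ∧
    ((E₁ ∪ E₂) ∩ Ωᶜ = E₂ ∩ Ωᶜ ∧ ∀ F : Set X, F ∩ Ωᶜ = E₂ ∩ Ωᶜ → P (E₁ ∪ E₂) ≤ P F) := by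
  have htrInt : (E₁ ∩ E₂) ∩ Ωᶜ = E₁ ∩ Ωᶜ := by
    apply Set.Subset.antisymm
    · intro x hx; exact ⟨hx.1.1, hx.2⟩
    · intro x hx; exact ⟨⟨hx.1, (hnest hx).1⟩, hx.2⟩
  have htrUn : (E₁ ∪ E₂) ∩ Ωᶜ = E₂ ∩ Ωᶜ := by
    apply Set.Subset.antisymm
    · rintro x ⟨h1 | h2, hc⟩
      · exact hnest ⟨h1, hc⟩
      · exact ⟨h2, hc⟩
    · intro x hx; exact ⟨Or.inr hx.1, hx.2⟩
  have h1 : P E₁ ≤ P (E₁ ∩ E₂) := hmin1 _ htrInt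
  have h2 : P E₂ ≤ P (E₁ ∪ E₂) := hmin2 _ htrUn
  have hs := hsub E₁ E₂
  have eq1 : P (E₁ ∩ E₂) = P E₁ := by linarith
  have eq2 : P (E₁ ∪ E₂) = P E₂ := by linarith
  exact ⟨⟨htrInt, fun F hF => eq1 ▸ hmin1 F hF⟩, ⟨htrUn, fun F hF => eq2 ▸ hmin2 F hF⟩⟩
end

section
/- Let Ω ⊂ ℝⁿ be a bounded open set with C¹ boundary, let a : closure(Ω) → ℝ be continuous, and let J : closure(Ω) → ℝⁿ be a C¹ vector field with div J = 0 in Ω and |J(x)| = a(x) for all x. Suppose u ∈ C¹(closure(Ω)) satisfies J(x)·∇u(x) = a(x)|∇u(x)| for all x ∈ Ω. Then for every w ∈ C¹(closure(Ω)) with w = u on ∂Ω, one has ∫_Ω a|∇u| dx ≤ ∫_Ω a|∇w| dx. -/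
set_option maxHeartbeats 1600000

set_option maxHeartbeats 1600000

open MeasureTheory Set Metric RealInnerProductSpace
open scoped Manifold
section AuxLemmas

lemma aux_fderiv_bound {E F : Type*} [NormedAddCommGroup E] [NormedSpace ℝ E]
    [NormedAddCommGroup F] [NormedSpace ℝ F] {Ω : Set E} (hΩ : IsOpen Ω)
    (hc : IsCompact (closure Ω)) {f : E → F} (hf : ContDiffOn ℝ 1 f (closure Ω)) :
    ∃ C : ℝ, ∀ x ∈ Ω, ‖fderiv ℝ f x‖ ≤ C := by
  have key : ∀ x ∈ closure Ω, ∃ V : Set E, IsOpen V ∧ x ∈ V ∧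
      ∃ C : ℝ, ∀ y ∈ Ω ∩ V, ‖fderiv ℝ f y‖ ≤ C := by
    intro x hx
    have hcd : ContDiffWithinAt ℝ ((0 : ℕ∞) + 1) f (closure Ω) x := by
      have := hf x hx
      norm_num at this ⊢
      exact this
    rcases (contDiffWithinAt_succ_iff_hasFDerivWithinAt (by simp)).1 hcd with
      ⟨U, hU, -, f', hf'U, hf'c⟩
    rw [insert_eq_of_mem hx] at hU
    rcases mem_nhdsWithin.1 hU with ⟨V, hVopen, hxV, hVU⟩
    have hcw : ContinuousWithinAt f' U x := hf'c.continuousWithinAt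
    have hev : ∀ᶠ y in nhdsWithin x U, ‖f' y‖ < ‖f' x‖ + 1 := by
      have : Metric.ball (f' x) 1 ∈ nhds (f' x) := Metric.ball_mem_nhds _ one_pos
      filter_upwards [hcw this] with y hy
      have : ‖f' y - f' x‖ < 1 := by simpa [dist_eq_norm] using hy
      have h3 := norm_sub_norm_le (f' y) (f' x)
      linarith
    rcases mem_nhdsWithin.1 hev with ⟨W, hWopen, hxW, hWb⟩
    refine ⟨V ∩ W, hVopen.inter hWopen, ⟨hxV, hxW⟩, ‖f' x‖ + 1, ?_⟩
    rintro y ⟨hyΩ, hyV, hyW⟩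
    have hyU : y ∈ U := hVU ⟨hyV, subset_closure hyΩ⟩
    have h1 : HasFDerivAt f (f' y) y := by
      have h2 : HasFDerivWithinAt f (f' y) (V ∩ Ω) y := (hf'U y hyU).mono
        (fun z hz => hVU ⟨hz.1, subset_closure hz.2⟩)
      exact h2.hasFDerivAt ((hVopen.inter hΩ).mem_nhds ⟨hyV, hyΩ⟩)
    rw [h1.fderiv]
    exact le_of_lt (hWb ⟨hyW, hyU⟩)
  choose V hVopen hxV C hC using key
  rcases hc.elim_finite_subcover (fun x : closure Ω => V x x.2) (fun x => hVopen x x.2)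
    (fun y hy => mem_iUnion.2 ⟨⟨y, hy⟩, hxV y hy⟩) with ⟨t, ht⟩
  refine ⟨∑ i ∈ t, |C i i.2|, fun y hy => ?_⟩
  rcases mem_iUnion₂.1 (ht (subset_closure hy)) with ⟨i, hit, hyV⟩
  calc ‖fderiv ℝ f y‖ ≤ C i i.2 := hC i i.2 y ⟨hy, hyV⟩
    _ ≤ |C i i.2| := le_abs_self _
    _ ≤ ∑ j ∈ t, |C j j.2| := Finset.single_le_sum (f := fun j : (closure Ω : Set E) => |C j j.2|) (fun j _ => abs_nonneg _) hit

lemma aux_null {n : ℕ} {Ω : Set (EuclideanSpace ℝ (Fin n))} (hΩ : IsOpen Ω)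
    {f : EuclideanSpace ℝ (Fin n) → ℝ}
    (hdiff : ∀ x ∈ Ω, DifferentiableAt ℝ f x)
    (hcont : ContinuousOn (fderiv ℝ f) Ω)
    (hfc : ContinuousOn f Ω) :
    volume {x | x ∈ Ω ∧ f x = 0 ∧ fderiv ℝ f x ≠ 0} = 0 := by
  set S := {x | x ∈ Ω ∧ f x = 0 ∧ fderiv ℝ f x ≠ 0} with hS
  have hSmeas : MeasurableSet S := by
    have h1 : IsOpen (Ω ∩ f ⁻¹' ({0}ᶜ)) := hfc.isOpen_inter_preimage hΩ isOpen_compl_singleton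
    have h2 : IsOpen (Ω ∩ (fderiv ℝ f) ⁻¹' ({0}ᶜ)) :=
      hcont.isOpen_inter_preimage hΩ isOpen_compl_singleton
    have : S = (Ω \ (Ω ∩ f ⁻¹' ({0}ᶜ))) ∩ (Ω ∩ (fderiv ℝ f) ⁻¹' ({0}ᶜ)) := by
      ext x; simp only [hS, mem_inter_iff, mem_diff, mem_setOf_eq, mem_inter_iff,
        mem_preimage, mem_compl_iff, mem_singleton_iff]
      tauto
    rw [this]
    exact ((hΩ.measurableSet.diff h1.measurableSet).inter h2.measurableSet)
  -- key: no point of S is a density point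
  have hkey : ∀ x ∈ S, ¬ Filter.Tendsto
      (fun r => volume (S ∩ closedBall x r) / volume (closedBall x r))
      (nhdsWithin 0 (Ioi 0)) (nhds 1) := by
    rintro x ⟨hxΩ, hfx, hLne⟩
    have hnt : Nontrivial (EuclideanSpace ℝ (Fin n)) := by
      by_contra h
      have : Subsingleton (EuclideanSpace ℝ (Fin n)) := not_nontrivial_iff_subsingleton.1 h
      exact hLne (by ext z; rw [Subsingleton.elim z 0]; simp)
    set L := fderiv ℝ f x with hL
    set c := ‖L‖ with hc
    have hcpos : 0 < c := norm_pos_iff.2 hLne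
    -- unit vector with L e = c
    set g := (InnerProductSpace.toDual ℝ (EuclideanSpace ℝ (Fin n))).symm L with hg
    have hgnorm : ‖g‖ = c := (InnerProductSpace.toDual ℝ (EuclideanSpace ℝ (Fin n))).symm.norm_map L
    set e := c⁻¹ • g with he
    have henorm : ‖e‖ = 1 := by
      rw [he, norm_smul, hgnorm, norm_inv, Real.norm_eq_abs, abs_of_pos hcpos,
        inv_mul_cancel₀ hcpos.ne']
    have hLe : L e = c := by
      have hLg : ∀ z, L z = ⟪g, z⟫ := fun z => (InnerProductSpace.toDual_symm_apply).symm
      rw [he, L.map_smul, smul_eq_mul, hLg, real_inner_self_eq_norm_sq, hgnorm]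
      field_simp
    -- continuity of fderiv near x
    have hcx : ContinuousAt (fderiv ℝ f) x := hcont.continuousAt (hΩ.mem_nhds hxΩ)
    have hball : ∀ᶠ y in nhds x, ‖fderiv ℝ f y - L‖ < c/4 := by
      have : Metric.ball L (c/4) ∈ nhds L := Metric.ball_mem_nhds _ (by linarith)
      filter_upwards [hcx this] with y hy
      simpa [dist_eq_norm] using hy
    rcases Metric.mem_nhds_iff.1 (Filter.inter_mem (hΩ.mem_nhds hxΩ) hball) with ⟨r₀, hr₀pos, hr₀⟩
    -- properties on ball x r₀
    have hsub : ball x r₀ ⊆ Ω := fun z hz => (hr₀ hz).1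
    have hder : ∀ y ∈ ball x r₀, ‖fderiv ℝ f y - L‖ < c/4 := fun y hy => (hr₀ hy).2
    have hdnorm : ∀ y ∈ ball x r₀, ‖fderiv ℝ f y‖ ≤ 2*c := by
      intro y hy
      have h1 := hder y hy
      have h2 := norm_sub_norm_le (fderiv ℝ f y) L
      rw [← hL, ← hc] at *
      linarith
    have hlip : ∀ y z, y ∈ ball x r₀ → z ∈ ball x r₀ → ‖f z - f y‖ ≤ 2*c * ‖z - y‖ :=
      fun y z hy hz => Convex.norm_image_sub_le_of_norm_fderiv_le
        (fun w hw => hdiff w (hsub hw)) hdnorm (convex_ball x r₀) hy hz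
    -- lower bound along e
    have hlower : ∀ r : ℝ, 0 < r → r < r₀ → c/4 * r ≤ f (x + (r/2) • e) := by
      intro r hr hrr
      set G : ℝ → ℝ := fun t => f (x + t • e) with hG
      have hmem : ∀ t ∈ Icc (0:ℝ) (r/2), x + t • e ∈ ball x r₀ := by
        intro t ht
        simp only [mem_ball, dist_eq_norm, add_sub_cancel_left, norm_smul, henorm,
          mul_one, Real.norm_eq_abs, abs_of_nonneg ht.1]
        linarith [ht.2]
      have hGder : ∀ t, x + t • e ∈ ball x r₀ → HasDerivAt G (fderiv ℝ f (x + t • e) e) t := by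
        intro t ht
        have h1 : HasDerivAt (fun s : ℝ => x + s • e) e t := by
          simpa using ((hasDerivAt_id t).smul_const e).const_add x
        exact ((hdiff _ (hsub ht)).hasFDerivAt.comp_hasDerivAt t h1)
      have hGc : ContinuousOn G (Icc 0 (r/2)) := by
        intro t ht
        exact ((hGder t (hmem t ht)).continuousAt).continuousWithinAt
      have hGd : DifferentiableOn ℝ G (interior (Icc (0:ℝ) (r/2))) := by
        intro t ht
        rw [interior_Icc] at ht
        exact ((hGder t (hmem t (Ioo_subset_Icc_self ht))).differentiableAt).differentiableWithinAt
      have hGd' : ∀ t ∈ interior (Icc (0:ℝ) (r/2)), c/2 ≤ deriv G t := by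
        intro t ht
        rw [interior_Icc] at ht
        rw [(hGder t (hmem t (Ioo_subset_Icc_self ht))).deriv]
        have h1 := hder _ (hmem t (Ioo_subset_Icc_self ht))
        have h2 : ‖(fderiv ℝ f (x + t • e) - L) e‖ ≤ ‖fderiv ℝ f (x + t • e) - L‖ * ‖e‖ :=
          ContinuousLinearMap.le_opNorm _ _
        rw [henorm, mul_one] at h2
        have h3 : |fderiv ℝ f (x + t • e) e - L e| ≤ c/4 := by
          have heq : (fderiv ℝ f (x + t • e) - L) e = fderiv ℝ f (x + t • e) e - L e := by simp
          rw [heq] at h2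
          calc |fderiv ℝ f (x + t • e) e - L e| ≤ ‖fderiv ℝ f (x + t • e) - L‖ := h2
            _ ≤ c/4 := le_of_lt h1
        have h4 := abs_le.1 h3
        rw [hLe] at h4
        linarith [h4.1]
      have hkey := (convex_Icc (0:ℝ) (r/2)).mul_sub_le_image_sub_of_le_deriv hGc hGd hGd'
        0 (left_mem_Icc.2 (by linarith)) (r/2) (right_mem_Icc.2 (by linarith)) (by linarith)
      have hG0 : G 0 = 0 := by simp [hG, hfx]
      rw [hG0, sub_zero, sub_zero] at hkey
      calc c/4 * r = c/2 * (r/2) := by ring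
        _ ≤ G (r/2) := hkey
    -- porosity: closedBall (x + (r/2)•e) (r/16) misses S and sits in closedBall x r
    have hporous : ∀ r : ℝ, 0 < r → r < r₀ →
        (S ∩ closedBall x r ⊆ closedBall x r \ closedBall (x + (r/2) • e) (r/16)) ∧
        closedBall (x + (r/2) • e) (r/16) ⊆ closedBall x r := by
      intro r hr hrr
      have hsub2 : closedBall (x + (r/2) • e) (r/16) ⊆ closedBall x r := by
        intro y hy
        rw [mem_closedBall] at *
        have h1 : dist y x ≤ dist y (x + (r/2) • e) + dist (x + (r/2) • e) x := dist_triangle _ _ _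
        have h2 : dist (x + (r/2) • e) x = r/2 := by
          simp [dist_eq_norm, norm_smul, henorm, abs_of_nonneg (by linarith : (0:ℝ) ≤ r/2), abs_of_pos hr]
        linarith
      refine ⟨fun y ⟨hyS, hycb⟩ => ⟨hycb, fun hyb => ?_⟩, hsub2⟩
      -- y in small ball: f y > 0, contradiction with f y = 0
      have hyball : y ∈ ball x r₀ := by
        have := hsub2 hyb
        rw [mem_closedBall] at this
        rw [mem_ball]
        linarith
      have hz : x + (r/2) • e ∈ ball x r₀ := by
        rw [mem_ball]
        have : dist (x + (r/2) • e) x = r/2 := by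
          simp [dist_eq_norm, norm_smul, henorm, abs_of_nonneg (by linarith : (0:ℝ) ≤ r/2), abs_of_pos hr]
        linarith
      have h1 := hlip _ y hz hyball
      have h2 : ‖y - (x + (r/2) • e)‖ ≤ r/16 := by
        rw [mem_closedBall, dist_eq_norm] at hyb
        exact hyb
      have h3 : ‖f y - f (x + (r/2) • e)‖ ≤ 2*c*(r/16) := by
        calc ‖f y - f (x + (r/2) • e)‖ ≤ 2*c * ‖y - (x + (r/2) • e)‖ := h1
          _ ≤ 2*c*(r/16) := by nlinarith
      have h4 := hlower r hr hrr
      have h5 := abs_le.1 (by rwa [Real.norm_eq_abs] at h3)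
      have : f y > 0 := by nlinarith
      rw [hyS.2.1] at this
      exact lt_irrefl _ this
    -- density computation
    intro htend
    set d := Module.finrank ℝ (EuclideanSpace ℝ (Fin n)) with hd
    set V := volume (ball (0:EuclideanSpace ℝ (Fin n)) 1) with hV
    have hV0 : V ≠ 0 := (measure_ball_pos volume 0 one_pos).ne'
    have hVtop : V ≠ ⊤ := measure_ball_lt_top.ne
    set q : ENNReal := ENNReal.ofReal ((1:ℝ)/16 ^ d) with hq
    have hratio : ∀ r : ℝ, 0 < r → r < r₀ →
        volume (S ∩ closedBall x r) / volume (closedBall x r) ≤ 1 - ENNReal.ofReal ((1/16:ℝ)^d) := by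
      intro r hr hrr
      rcases hporous r hr hrr with ⟨hsub1, hsub2⟩
      have hcb : volume (closedBall x r) = ENNReal.ofReal (r^d) * V :=
        Measure.addHaar_closedBall volume x hr.le
      have hcb2 : volume (closedBall (x + (r/2) • e) (r/16)) = ENNReal.ofReal ((r/16)^d) * V :=
        Measure.addHaar_closedBall volume (x + (r/2) • e) (show (0:ℝ) ≤ r/16 by positivity)
      have hmono := measure_mono (μ := (volume : Measure (EuclideanSpace ℝ (Fin n)))) hsub1
      have hdiff2 : volume (closedBall x r \ closedBall (x + (r/2) • e) (r/16)) =
          volume (closedBall x r) - volume (closedBall (x + (r/2) • e) (r/16)) :=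
        measure_diff hsub2 measurableSet_closedBall.nullMeasurableSet
          (measure_closedBall_lt_top).ne
      have hsmall : ENNReal.ofReal ((r/16)^d) = ENNReal.ofReal ((1/16:ℝ)^d) * ENNReal.ofReal (r^d) := by
        rw [← ENNReal.ofReal_mul (by positivity)]
        congr 1
        rw [div_pow, div_pow]
        ring
      have hAV0 : ENNReal.ofReal (r^d) * V ≠ 0 := by
        apply mul_ne_zero _ hV0
        simp [ENNReal.ofReal_eq_zero, not_le]
        positivity
      have hAVtop : ENNReal.ofReal (r^d) * V ≠ ⊤ := ENNReal.mul_ne_top ENNReal.ofReal_ne_top hVtop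
      calc volume (S ∩ closedBall x r) / volume (closedBall x r)
          ≤ (volume (closedBall x r) - volume (closedBall (x + (r/2) • e) (r/16))) /
            volume (closedBall x r) := by
            rw [← hdiff2]
            exact ENNReal.div_le_div_right hmono _
        _ = (ENNReal.ofReal (r^d) * V - ENNReal.ofReal ((1/16:ℝ)^d) * (ENNReal.ofReal (r^d) * V)) /
            (ENNReal.ofReal (r^d) * V) := by
            rw [hcb, hcb2, hsmall, mul_assoc]
        _ = ((1 - ENNReal.ofReal ((1/16:ℝ)^d)) * (ENNReal.ofReal (r^d) * V)) /
            (ENNReal.ofReal (r^d) * V) := by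
            congr 1
            rw [ENNReal.sub_mul (fun _ _ => hAVtop), one_mul]
        _ = 1 - ENNReal.ofReal ((1/16:ℝ)^d) := by
            rw [mul_div_assoc, ENNReal.div_self hAV0 hAVtop, mul_one]
    have hev : ∀ᶠ r in nhdsWithin (0:ℝ) (Ioi 0),
        volume (S ∩ closedBall x r) / volume (closedBall x r) ≤ 1 - ENNReal.ofReal ((1/16:ℝ)^d) := by
      filter_upwards [Ioo_mem_nhdsGT_of_mem (Set.mem_Ico.2 ⟨le_refl 0, hr₀pos⟩)] with r hr
      exact hratio r hr.1 hr.2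
    have hle := le_of_tendsto htend hev
    have h116 : (0:ℝ) < (1/16:ℝ)^d := by positivity
    have hqpos : ENNReal.ofReal ((1/16:ℝ)^d) ≠ 0 := by
      simp [ENNReal.ofReal_eq_zero, not_le, h116]
    have : (1:ENNReal) - ENNReal.ofReal ((1/16:ℝ)^d) < 1 :=
      ENNReal.sub_lt_self ENNReal.one_ne_top one_ne_zero hqpos
    exact absurd (lt_of_le_of_lt hle this) (lt_irrefl _)
  -- conclude
  have hae := Besicovitch.ae_tendsto_measure_inter_div volume S
  rw [ae_restrict_iff' hSmeas] at hae
  rw [measure_eq_zero_iff_ae_notMem]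
  filter_upwards [hae] with y hy
  intro hyS
  exact hkey y hyS (hy hyS)

lemma aux_eta {ε : ℝ} (hε : 0 < ε) :
    ∃ η θ : ℝ → ℝ, (∀ t, HasDerivAt η (θ t) t) ∧ Continuous θ ∧
      (∀ t, |t| ≤ ε → η t = 0) ∧ (∀ t, |t| ≤ ε → θ t = 0) ∧
      (∀ t, 2*ε ≤ |t| → θ t = 1) ∧ (∀ t, |θ t| ≤ 1) := by
  have hdisj : Disjoint (closedBall (0:ℝ) ε) ((ball (0:ℝ) (2*ε))ᶜ) :=
    (disjoint_compl_right (a := ball (0:ℝ) (2*ε))).mono_left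
      (closedBall_subset_ball (by linarith))
  obtain ⟨θ₀, hθ0, hθ1, hθmem⟩ := exists_contMDiffMap_zero_one_of_isClosed (n := (⊤ : ℕ∞)) (𝓘(ℝ, ℝ))
    (isClosed_closedBall : IsClosed (closedBall (0:ℝ) ε)) (isOpen_ball.isClosed_compl) hdisj
  set θ : ℝ → ℝ := ⇑θ₀ with hθ
  have hcont : Continuous θ := θ₀.contMDiff.continuous
  have hmem0 : ∀ t : ℝ, |t| ≤ ε → θ t = 0 := by
    intro t ht
    exact hθ0 (by simpa [Real.closedBall_eq_Icc, abs_le] using abs_le.1 ht)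
  have hmem1 : ∀ t : ℝ, 2*ε ≤ |t| → θ t = 1 := by
    intro t ht
    refine hθ1 ?_
    simp only [mem_compl_iff, mem_ball, Real.dist_eq, sub_zero, not_lt]
    exact ht
  refine ⟨fun t => ∫ s in (0:ℝ)..t, θ s, θ, ?_, hcont, ?_, hmem0, hmem1, ?_⟩
  · intro t
    exact intervalIntegral.integral_hasDerivAt_right (hcont.intervalIntegrable 0 t)
      (hcont.stronglyMeasurableAtFilter _ _) hcont.continuousAt
  · intro t ht
    have : EqOn θ 0 (uIcc 0 t) := by
      intro s hs
      rw [Set.mem_uIcc] at hs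
      have habs := abs_le.1 ht
      refine hmem0 s (abs_le.2 ?_)
      rcases hs with ⟨h1, h2⟩ | ⟨h1, h2⟩ <;> constructor <;> linarith
    show (∫ s in (0:ℝ)..t, θ s) = 0
    rw [intervalIntegral.integral_congr this]
    simp
  · intro t
    have h1 := (hθmem t).1
    have h2 := (hθmem t).2
    rw [abs_le]
    exact ⟨by linarith, h2⟩

lemma aux_coord {n : ℕ} (x : EuclideanSpace ℝ (Fin n)) (i : Fin n) : |x i| ≤ ‖x‖ := by
  rw [EuclideanSpace.norm_eq]
  rw [show |x i| = Real.sqrt (|x i|^2) by rw [Real.sqrt_sq_eq_abs, abs_abs]]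
  apply Real.sqrt_le_sqrt
  have : |x i|^2 = ‖x i‖^2 := by rw [Real.norm_eq_abs]
  rw [this]
  exact Finset.single_le_sum (f := fun j => ‖x j‖^2) (fun j _ => sq_nonneg _) (Finset.mem_univ i)

lemma aux_div {m : ℕ} (F : EuclideanSpace ℝ (Fin (m+1)) → EuclideanSpace ℝ (Fin (m+1)))
    (F' : EuclideanSpace ℝ (Fin (m+1)) →
      EuclideanSpace ℝ (Fin (m+1)) →L[ℝ] EuclideanSpace ℝ (Fin (m+1)))
    (hd : ∀ x, HasFDerivAt F (F' x) x)
    {K : Set (EuclideanSpace ℝ (Fin (m+1)))} (hK : IsCompact K)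
    (hsupp : ∀ x ∉ K, F x = 0)
    (hi : Integrable (fun x => ∑ i, F' x (EuclideanSpace.single i 1) i)) :
    ∫ x, ∑ i, F' x (EuclideanSpace.single i 1) i = 0 := by
  classical
  have h0 : ∀ x ∉ K, F' x = 0 := by
    intro x hx
    have hev : F =ᶠ[nhds x] (fun _ => 0) := by
      filter_upwards [hK.isClosed.isOpen_compl.mem_nhds hx] with y hy using hsupp y hy
    have h1 : HasFDerivAt F (0 : _ →L[ℝ] _) x :=
      (hasFDerivAt_const (0 : EuclideanSpace ℝ (Fin (m+1))) x).congr_of_eventuallyEq hev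
    exact (hd x).unique h1
  obtain ⟨R', hR'⟩ := hK.isBounded.subset_closedBall 0
  set R : ℝ := |R'| + 1 with hR
  have hRpos : 0 < R := by positivity
  have hKR : ∀ z ∈ K, ‖z‖ < R := by
    intro z hz
    have := hR' hz
    rw [Metric.mem_closedBall, dist_zero_right] at this
    calc ‖z‖ ≤ R' := this
      _ ≤ |R'| := le_abs_self _
      _ < R := by rw [hR]; linarith
  have hnotK : ∀ z : EuclideanSpace ℝ (Fin (m+1)), R ≤ ‖z‖ → z ∉ K :=
    fun z hz hzK => absurd (hKR z hzK) (not_lt.2 hz)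
  set a : Fin (m+1) → ℝ := fun _ => -R with ha
  set b : Fin (m+1) → ℝ := fun _ => R with hb
  have hle : a ≤ b := fun i => by simp [ha, hb]; linarith
  set eL := EuclideanSpace.equiv (Fin (m+1)) ℝ with heL
  set G : (Fin (m+1) → ℝ) → (Fin (m+1) → ℝ) := fun y => eL (F (eL.symm y)) with hG
  set G' : (Fin (m+1) → ℝ) → (Fin (m+1) → ℝ) →L[ℝ] (Fin (m+1) → ℝ) :=
    fun y => ((eL : EuclideanSpace ℝ (Fin (m+1)) →L[ℝ] (Fin (m+1) → ℝ)).comp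
      ((F' (eL.symm y)).comp
        ((eL.symm : (Fin (m+1) → ℝ) →L[ℝ] EuclideanSpace ℝ (Fin (m+1)))))) with hG'
  have hGd : ∀ y, HasFDerivAt G (G' y) y := by
    intro y
    have h1 : HasFDerivAt (fun y : Fin (m+1) → ℝ => F (eL.symm y))
        ((F' (eL.symm y)).comp
          ((eL.symm : (Fin (m+1) → ℝ) →L[ℝ] EuclideanSpace ℝ (Fin (m+1))))) y :=
      (hd (eL.symm y)).comp y eL.symm.hasFDerivAt
    exact (eL.hasFDerivAt).comp y h1
  have hGdiv : ∀ y, ∑ i, G' y (Pi.single i 1) i =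
      ∑ i, F' (eL.symm y) (EuclideanSpace.single i 1) i := by
    intro y
    exact Finset.sum_congr rfl fun i _ => rfl
  -- the divergence of G vanishes outside Icc a b
  have hcoordR : ∀ (y : Fin (m+1) → ℝ) (i : Fin (m+1)), R ≤ |y i| →
      (eL.symm y) ∉ K := by
    intro y i hyi
    apply hnotK
    calc R ≤ |y i| := hyi
      _ = |(eL.symm y) i| := rfl
      _ ≤ ‖eL.symm y‖ := aux_coord _ _
  have hvanish : ∀ y ∉ Icc a b, ∑ i, F' (eL.symm y) (EuclideanSpace.single i 1) i = 0 := by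
    intro y hy
    rw [mem_Icc] at hy
    have : ∃ i, ¬ (a i ≤ y i ∧ y i ≤ b i) := by
      by_contra h
      push_neg at h
      exact hy ⟨fun i => (h i).1, fun i => (h i).2⟩
    rcases this with ⟨i, hi2⟩
    have hRy : R ≤ |y i| := by
      rw [not_and_or] at hi2
      rcases hi2 with h | h
      · push_neg at h
        simp only [ha] at h
        calc R ≤ -(y i) := by linarith
          _ ≤ |y i| := neg_le_abs _
      · push_neg at h
        simp only [hb] at h
        calc R ≤ y i := h.le
          _ ≤ |y i| := le_abs_self _
    have hz := hcoordR y i hRy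
    simp [h0 _ hz]
  -- continuity and integrability for the box divergence theorem
  have hFc : Continuous F := continuous_iff_continuousAt.2 fun x => (hd x).continuousAt
  have hGc : ContinuousOn G (Icc a b) :=
    (eL.continuous.comp (hFc.comp eL.symm.continuous)).continuousOn
  have hGint : Integrable (fun y => ∑ i, F' (eL.symm y) (EuclideanSpace.single i 1) i) := by
    have hmp := (EuclideanSpace.volume_preserving_symm_measurableEquiv_toLp (Fin (m+1))).symm
    exact (hmp.integrable_comp_emb
      (MeasurableEquiv.toLp 2 (Fin (m+1) → ℝ)).measurableEmbedding).2 hi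
  have hGint' : IntegrableOn (fun y => ∑ i, G' y (Pi.single i 1) i) (Icc a b) := by
    have : (fun y => ∑ i, G' y (Pi.single i 1) i) =
        fun y => ∑ i, F' (eL.symm y) (EuclideanSpace.single i 1) i := funext hGdiv
    rw [this]
    exact hGint.integrableOn
  have hmain := MeasureTheory.integral_divergence_of_hasFDerivAt_off_countable
    a b hle G G' ∅ countable_empty hGc (fun x _ => hGd x) hGint'
  -- all face integrals vanish
  have hfaces : ∀ i : Fin (m+1), (∫ x in Icc (a ∘ i.succAbove) (b ∘ i.succAbove),
      G (i.insertNth (b i) x) i) - ∫ x in Icc (a ∘ i.succAbove) (b ∘ i.succAbove),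
      G (i.insertNth (a i) x) i = 0 := by
    intro i
    have hz1 : ∀ x : Fin m → ℝ, G (i.insertNth (b i) x) i = 0 := by
      intro x
      have h1 : R ≤ |(i.insertNth (b i) x : Fin (m+1) → ℝ) i| := by
        rw [Fin.insertNth_apply_same]
        simp [hb, abs_of_pos hRpos]
      have h2 := hcoordR _ i h1
      show (F (eL.symm (i.insertNth (b i) x))) i = 0
      rw [hsupp _ h2]
      rfl
    have hz2 : ∀ x : Fin m → ℝ, G (i.insertNth (a i) x) i = 0 := by
      intro x
      have h1 : R ≤ |(i.insertNth (a i) x : Fin (m+1) → ℝ) i| := by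
        rw [Fin.insertNth_apply_same]
        simp [ha, abs_of_pos hRpos]
      have h2 := hcoordR _ i h1
      show (F (eL.symm (i.insertNth (a i) x))) i = 0
      rw [hsupp _ h2]
      rfl
    simp [hz1, hz2]
  rw [Finset.sum_congr rfl (fun i _ => hfaces i), Finset.sum_const_zero] at hmain
  -- transfer back
  have hint1 : ∫ x, ∑ i, F' x (EuclideanSpace.single i 1) i =
      ∫ y, ∑ i, F' (eL.symm y) (EuclideanSpace.single i 1) i := by
    have hmp := (EuclideanSpace.volume_preserving_symm_measurableEquiv_toLp (Fin (m+1))).symm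
    exact (hmp.integral_comp (MeasurableEquiv.toLp 2 (Fin (m+1) → ℝ)).measurableEmbedding
      (fun x => ∑ i, F' x (EuclideanSpace.single i 1) i)).symm
  have hint2 : ∫ y in Icc a b, ∑ i, F' (eL.symm y) (EuclideanSpace.single i 1) i =
      ∫ y, ∑ i, F' (eL.symm y) (EuclideanSpace.single i 1) i :=
    setIntegral_eq_integral_of_forall_compl_eq_zero hvanish
  have hint3 : ∫ y in Icc a b, ∑ i, G' y (Pi.single i 1) i =
      ∫ y in Icc a b, ∑ i, F' (eL.symm y) (EuclideanSpace.single i 1) i := by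
    simp only [hGdiv]
  rw [hint1, ← hint2, ← hint3, hmain]

end AuxLemmas



open MeasureTheory RealInnerProductSpace

/-- calibration argument. If `J` is a divergence-free `C¹` vector field on a
bounded open set `Ω ⊂ ℝⁿ` with `C¹` boundary, `|J| = a`, and `u ∈ C¹(closure Ω)` satisfies
`J·∇u = a|∇u|`, then `u` minimizes `∫_Ω a|∇w|` among `w ∈ C¹(closure Ω)` with `w = u`
on `∂Ω`. -/
theorem stmt9 (n : ℕ) (Ω : Set (EuclideanSpace ℝ (Fin n)))
    (hΩopen : IsOpen Ω) (hΩbdd : Bornology.IsBounded Ω)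
    -- C¹ boundary: each boundary point admits a C¹ local defining function
    (hC1bdry : ∀ x ∈ frontier Ω, ∃ g : EuclideanSpace ℝ (Fin n) → ℝ,
      ContDiffAt ℝ 1 g x ∧ fderiv ℝ g x ≠ 0 ∧ ∀ᶠ y in nhds x, (y ∈ Ω ↔ g y < 0))
    (a : EuclideanSpace ℝ (Fin n) → ℝ) (ha : ContinuousOn a (closure Ω))
    (J : EuclideanSpace ℝ (Fin n) → EuclideanSpace ℝ (Fin n))
    (hJ : ContDiffOn ℝ 1 J (closure Ω))
    (hdiv : ∀ x ∈ Ω, ∑ i : Fin n,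
      fderiv ℝ (fun y => J y i) x (EuclideanSpace.single i 1) = 0)
    (hJa : ∀ x ∈ closure Ω, ‖J x‖ = a x)
    (u : EuclideanSpace ℝ (Fin n) → ℝ) (hu : ContDiffOn ℝ 1 u (closure Ω))
    (hcalib : ∀ x ∈ Ω, ⟪J x, gradient u x⟫ = a x * ‖gradient u x‖) :
    ∀ w : EuclideanSpace ℝ (Fin n) → ℝ, ContDiffOn ℝ 1 w (closure Ω) →
      (∀ x ∈ frontier Ω, w x = u x) →
      ∫ x in Ω, a x * ‖gradient u x‖ ≤ ∫ x in Ω, a x * ‖gradient w x‖ := by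
  intro w hw hwu
  classical
  by_cases hn : n = 0
  · subst hn
    have hsub : Subsingleton (EuclideanSpace ℝ (Fin 0)) :=
      ⟨fun a b => by ext i; exact Fin.elim0 i⟩
    have hg : ∀ x, gradient u x = gradient w x := fun x => Subsingleton.elim _ _
    simp only [hg]
    exact le_refl _
  obtain ⟨m, rfl⟩ := Nat.exists_eq_succ_of_ne_zero hn
  have hclos : IsCompact (closure Ω) := hΩbdd.isCompact_closure
  have hΩsub : Ω ⊆ closure Ω := subset_closure
  have hmeas : MeasurableSet Ω := hΩopen.measurableSet
  set v : EuclideanSpace ℝ (Fin (m+1)) → ℝ := fun x => w x - u x with hvdef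
  have hv : ContDiffOn ℝ 1 v (closure Ω) := hw.sub hu
  have hv0 : ∀ x ∈ frontier Ω, v x = 0 := fun x hx => by simp [hvdef, hwu x hx]
  have hdu : ∀ x ∈ Ω, DifferentiableAt ℝ u x := fun x hx =>
    ((hu.mono hΩsub).differentiableOn one_ne_zero).differentiableAt (hΩopen.mem_nhds hx)
  have hdw : ∀ x ∈ Ω, DifferentiableAt ℝ w x := fun x hx =>
    ((hw.mono hΩsub).differentiableOn one_ne_zero).differentiableAt (hΩopen.mem_nhds hx)
  have hdv : ∀ x ∈ Ω, DifferentiableAt ℝ v x := fun x hx =>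
    ((hv.mono hΩsub).differentiableOn one_ne_zero).differentiableAt (hΩopen.mem_nhds hx)
  have hdJ : ∀ x ∈ Ω, DifferentiableAt ℝ J x := fun x hx =>
    ((hJ.mono hΩsub).differentiableOn one_ne_zero).differentiableAt (hΩopen.mem_nhds hx)
  have hcu : ContinuousOn (fderiv ℝ u) Ω :=
    (hu.mono hΩsub).continuousOn_fderiv_of_isOpen hΩopen le_rfl
  have hcw : ContinuousOn (fderiv ℝ w) Ω :=
    (hw.mono hΩsub).continuousOn_fderiv_of_isOpen hΩopen le_rfl
  have hcv : ContinuousOn (fderiv ℝ v) Ω :=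
    (hv.mono hΩsub).continuousOn_fderiv_of_isOpen hΩopen le_rfl
  obtain ⟨Cu, hCu⟩ := aux_fderiv_bound hΩopen hclos hu
  obtain ⟨Cw, hCw⟩ := aux_fderiv_bound hΩopen hclos hw
  obtain ⟨Cv, hCv⟩ := aux_fderiv_bound hΩopen hclos hv
  obtain ⟨Ca, hCa⟩ := hclos.exists_bound_of_continuousOn ha
  have hJb : ∀ x ∈ closure Ω, ‖J x‖ ≤ |Ca| := by
    intro x hx
    rw [hJa x hx]
    calc a x ≤ |a x| := le_abs_self _
      _ = ‖a x‖ := (Real.norm_eq_abs _).symm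
      _ ≤ Ca := hCa x hx
      _ ≤ |Ca| := le_abs_self _
  have hμΩ : volume Ω < ⊤ := by
    obtain ⟨r, hr⟩ := hΩbdd.subset_closedBall 0
    exact lt_of_le_of_lt (measure_mono hr) measure_closedBall_lt_top
  have hIOn : ∀ (f : EuclideanSpace ℝ (Fin (m+1)) → ℝ) (C : ℝ), ContinuousOn f Ω →
      (∀ x ∈ Ω, |f x| ≤ C) → IntegrableOn f Ω := by
    intro f C hfc hfb
    refine ⟨hfc.aestronglyMeasurable hmeas, ?_⟩
    refine HasFiniteIntegral.restrict_of_bounded (C := C) hμΩ ?_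
    rw [ae_restrict_iff' hmeas]
    exact Filter.Eventually.of_forall fun x hx => by
      simpa [Real.norm_eq_abs] using hfb x hx
  have hgradinner : ∀ (f : EuclideanSpace ℝ (Fin (m+1)) → ℝ) x,
      ⟪J x, gradient f x⟫ = fderiv ℝ f x (J x) := by
    intro f x
    rw [real_inner_comm]
    exact InnerProductSpace.toDual_symm_apply
  have hgradnorm : ∀ (f : EuclideanSpace ℝ (Fin (m+1)) → ℝ) x,
      ‖gradient f x‖ = ‖fderiv ℝ f x‖ := fun f x =>
    (InnerProductSpace.toDual ℝ _).symm.norm_map _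
  have hJcont : ContinuousOn J Ω := hJ.continuousOn.mono hΩsub
  have hvcont : ContinuousOn v (closure Ω) := hv.continuousOn
  -- integrability of the relevant integrands
  have hIu : IntegrableOn (fun x => a x * ‖gradient u x‖) Ω := by
    refine hIOn _ (|Ca| * |Cu|) (((ha.mono hΩsub).mul
      (((InnerProductSpace.toDual ℝ _).symm.continuous.comp_continuousOn hcu).norm)) ) ?_
    intro x hx
    rw [abs_mul, abs_norm, hgradnorm]
    apply mul_le_mul _ ((hCu x hx).trans (le_abs_self _)) (norm_nonneg _) (abs_nonneg _)
    calc |a x| = ‖a x‖ := (Real.norm_eq_abs _).symm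
      _ ≤ Ca := hCa x (hΩsub hx)
      _ ≤ |Ca| := le_abs_self _
  have hIw : IntegrableOn (fun x => a x * ‖gradient w x‖) Ω := by
    refine hIOn _ (|Ca| * |Cw|) (((ha.mono hΩsub).mul
      (((InnerProductSpace.toDual ℝ _).symm.continuous.comp_continuousOn hcw).norm)) ) ?_
    intro x hx
    rw [abs_mul, abs_norm, hgradnorm]
    apply mul_le_mul _ ((hCw x hx).trans (le_abs_self _)) (norm_nonneg _) (abs_nonneg _)
    calc |a x| = ‖a x‖ := (Real.norm_eq_abs _).symm
      _ ≤ Ca := hCa x (hΩsub hx)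
      _ ≤ |Ca| := le_abs_self _
  have hbnd : ∀ (f : EuclideanSpace ℝ (Fin (m+1)) → ℝ) (Cf : ℝ),
      (∀ x ∈ Ω, ‖fderiv ℝ f x‖ ≤ Cf) → ∀ x ∈ Ω, |fderiv ℝ f x (J x)| ≤ |Cf| * |Ca| := by
    intro f Cf hCf x hx
    calc |fderiv ℝ f x (J x)| = ‖fderiv ℝ f x (J x)‖ := (Real.norm_eq_abs _).symm
      _ ≤ ‖fderiv ℝ f x‖ * ‖J x‖ := ContinuousLinearMap.le_opNorm _ _
      _ ≤ |Cf| * |Ca| := mul_le_mul ((hCf x hx).trans (le_abs_self _))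
          (hJb x (hΩsub hx)) (norm_nonneg _) (abs_nonneg _)
  have hIfu : IntegrableOn (fun x => fderiv ℝ u x (J x)) Ω :=
    hIOn _ (|Cu| * |Ca|) (hcu.clm_apply hJcont) (hbnd u Cu hCu)
  have hIfw : IntegrableOn (fun x => fderiv ℝ w x (J x)) Ω :=
    hIOn _ (|Cw| * |Ca|) (hcw.clm_apply hJcont) (hbnd w Cw hCw)
  -- THE KEY STEP: ∫_Ω (∇v)·J = 0
  have hkey : ∫ x in Ω, fderiv ℝ v x (J x) = 0 := by
    have hchoice : ∀ k : ℕ, ∃ η θ : ℝ → ℝ, (∀ t, HasDerivAt η (θ t) t) ∧ Continuous θ ∧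
        (∀ t, |t| ≤ 1/((k:ℝ)+1) → η t = 0) ∧ (∀ t, |t| ≤ 1/((k:ℝ)+1) → θ t = 0) ∧
        (∀ t, 2*(1/((k:ℝ)+1)) ≤ |t| → θ t = 1) ∧ (∀ t, |θ t| ≤ 1) :=
      fun k => aux_eta (show (0:ℝ) < 1/((k:ℝ)+1) by positivity)
    choose η θ hηθ hθc hη0 hθ0 hθ1 hθb using hchoice
    have hzerok : ∀ k : ℕ, ∫ x in Ω, θ k (v x) * fderiv ℝ v x (J x) = 0 := by
      intro k
      set Fk : EuclideanSpace ℝ (Fin (m+1)) → EuclideanSpace ℝ (Fin (m+1)) :=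
        fun x => if x ∈ Ω then η k (v x) • J x else 0 with hFk
      set Fk' : EuclideanSpace ℝ (Fin (m+1)) →
          EuclideanSpace ℝ (Fin (m+1)) →L[ℝ] EuclideanSpace ℝ (Fin (m+1)) :=
        fun x => if x ∈ Ω then
          (η k (v x)) • fderiv ℝ J x + ((θ k (v x)) • fderiv ℝ v x).smulRight (J x) else 0
        with hFk'
      set g : EuclideanSpace ℝ (Fin (m+1)) → ℝ :=
        fun x => if x ∈ Ω then θ k (v x) * fderiv ℝ v x (J x) else 0 with hgdef
      have hfront : ∀ x ∈ frontier Ω, ∃ V, IsOpen V ∧ x ∈ V ∧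
          (∀ y ∈ V, Fk y = 0) ∧ (∀ y ∈ V, g y = 0) := by
        intro x hx
        have hx' : x ∈ closure Ω := frontier_subset_closure hx
        have hcwv : ContinuousWithinAt v (closure Ω) x := hvcont x hx'
        have hsmall : ∀ᶠ y in nhdsWithin x (closure Ω), |v y| < 1/((k:ℝ)+1) := by
          have hv0x : v x = 0 := hv0 x hx
          have hball := hcwv (Metric.ball_mem_nhds (v x) (show (0:ℝ) < 1/((k:ℝ)+1) by positivity))
          filter_upwards [hball] with y hy
          rw [Set.mem_preimage, Metric.mem_ball, Real.dist_eq, hv0x, sub_zero] at hy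
          exact hy
        rcases mem_nhdsWithin.1 hsmall with ⟨V, hVo, hxV, hV⟩
        refine ⟨V, hVo, hxV, ?_, ?_⟩
        · intro y hy
          by_cases hyΩ : y ∈ Ω
          · have h1 : |v y| ≤ 1/((k:ℝ)+1) := (hV ⟨hy, hΩsub hyΩ⟩).le
            rw [hFk]
            simp only [if_pos hyΩ, hη0 k (v y) h1, zero_smul]
          · rw [hFk]; exact if_neg hyΩ
        · intro y hy
          by_cases hyΩ : y ∈ Ω
          · have h1 : |v y| ≤ 1/((k:ℝ)+1) := (hV ⟨hy, hΩsub hyΩ⟩).le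
            rw [hgdef]
            simp only [if_pos hyΩ, hθ0 k (v y) h1, zero_mul]
          · rw [hgdef]; exact if_neg hyΩ
      have hFd : ∀ x, HasFDerivAt Fk (Fk' x) x := by
        intro x
        by_cases hx : x ∈ Ω
        · have hev : Fk =ᶠ[nhds x] (fun y => η k (v y) • J y) := by
            filter_upwards [hΩopen.mem_nhds hx] with y hy
            rw [hFk]; exact if_pos hy
          have hde : HasFDerivAt (fun y => η k (v y) • J y)
              ((η k (v x)) • fderiv ℝ J x + ((θ k (v x)) • fderiv ℝ v x).smulRight (J x)) x := by
            have h1 : HasFDerivAt (fun y => η k (v y)) ((θ k (v x)) • fderiv ℝ v x) x :=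
              (hηθ k (v x)).comp_hasFDerivAt x (hdv x hx).hasFDerivAt
            exact h1.smul (hdJ x hx).hasFDerivAt
          have hFk'x : Fk' x = (η k (v x)) • fderiv ℝ J x +
              ((θ k (v x)) • fderiv ℝ v x).smulRight (J x) := by
            rw [hFk']; exact if_pos hx
          rw [hFk'x]
          exact hde.congr_of_eventuallyEq hev
        · have hFk'x : Fk' x = 0 := by rw [hFk']; exact if_neg hx
          rw [hFk'x]
          by_cases hx2 : x ∈ closure Ω
          · have hxf : x ∈ frontier Ω := by rw [hΩopen.frontier_eq]; exact ⟨hx2, hx⟩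
            obtain ⟨V, hVo, hxV, hV0, -⟩ := hfront x hxf
            have hev : Fk =ᶠ[nhds x] (fun _ => 0) := by
              filter_upwards [hVo.mem_nhds hxV] with y hy using hV0 y hy
            exact (hasFDerivAt_const (0 : EuclideanSpace ℝ (Fin (m+1))) x).congr_of_eventuallyEq hev
          · have hev : Fk =ᶠ[nhds x] (fun _ => 0) := by
              filter_upwards [hclos.isClosed.isOpen_compl.mem_nhds hx2] with y hy
              rw [hFk]; exact if_neg fun h => hy (hΩsub h)
            exact (hasFDerivAt_const (0 : EuclideanSpace ℝ (Fin (m+1))) x).congr_of_eventuallyEq hev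
      have hdivk : ∀ x, (∑ i, Fk' x (EuclideanSpace.single i 1) i) = g x := by
        intro x
        by_cases hx : x ∈ Ω
        · have hgx : g x = θ k (v x) * fderiv ℝ v x (J x) := by rw [hgdef]; exact if_pos hx
          have hFk'x : Fk' x = (η k (v x)) • fderiv ℝ J x +
              ((θ k (v x)) • fderiv ℝ v x).smulRight (J x) := by rw [hFk']; exact if_pos hx
          rw [hgx]
          have hsum : ∀ i : Fin (m+1), Fk' x (EuclideanSpace.single i 1) i =
              η k (v x) * (fderiv ℝ J x (EuclideanSpace.single i 1) i) +
              θ k (v x) * fderiv ℝ v x (EuclideanSpace.single i 1) * (J x i) := by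
            intro i
            rw [hFk'x]
            simp only [ContinuousLinearMap.add_apply, ContinuousLinearMap.coe_smul',
              Pi.smul_apply, ContinuousLinearMap.smulRight_apply, PiLp.add_apply,
              PiLp.smul_apply, smul_eq_mul]
          rw [Finset.sum_congr rfl fun i _ => hsum i, Finset.sum_add_distrib]
          have hz : (∑ i : Fin (m+1), η k (v x) * (fderiv ℝ J x (EuclideanSpace.single i 1) i)) = 0 := by
            rw [← Finset.mul_sum]
            have hcoords : (∑ i : Fin (m+1), fderiv ℝ J x (EuclideanSpace.single i 1) i) = 0 := by
              rw [← hdiv x hx]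
              refine Finset.sum_congr rfl fun i _ => ?_
              have hcomp : fderiv ℝ (fun y => J y i) x =
                  (EuclideanSpace.proj (𝕜 := ℝ) i).comp (fderiv ℝ J x) := by
                rw [show (fun y => J y i) = (⇑(EuclideanSpace.proj (𝕜 := ℝ) i)) ∘ J from rfl]
                rw [fderiv_comp x (EuclideanSpace.proj (𝕜 := ℝ) i).differentiableAt (hdJ x hx)]
                rw [ContinuousLinearMap.fderiv]
              rw [hcomp]
              rfl
            rw [hcoords, mul_zero]
          have hsum2 : (∑ i : Fin (m+1), θ k (v x) * fderiv ℝ v x (EuclideanSpace.single i 1) * (J x i)) =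
              θ k (v x) * fderiv ℝ v x (J x) := by
            have hdecomp : fderiv ℝ v x (J x) =
                ∑ i : Fin (m+1), (J x i) * fderiv ℝ v x (EuclideanSpace.single i 1) := by
              conv_lhs => rw [← (EuclideanSpace.basisFun (Fin (m+1)) ℝ).sum_repr (J x)]
              rw [map_sum]
              refine Finset.sum_congr rfl fun i _ => ?_
              rw [EuclideanSpace.basisFun_repr, EuclideanSpace.basisFun_apply, _root_.map_smul, smul_eq_mul]
            rw [hdecomp, Finset.mul_sum]
            exact Finset.sum_congr rfl fun i _ => by ring
          rw [hz, hsum2, zero_add]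
        · have h1 : Fk' x = 0 := by rw [hFk']; exact if_neg hx
          have h2 : g x = 0 := by rw [hgdef]; exact if_neg hx
          rw [h1, h2]
          simp
      have hgc : Continuous g := by
        rw [continuous_iff_continuousAt]
        intro x
        by_cases hx : x ∈ Ω
        · have hev : g =ᶠ[nhds x] (fun y => θ k (v y) * fderiv ℝ v y (J y)) := by
            filter_upwards [hΩopen.mem_nhds hx] with y hy
            rw [hgdef]; exact if_pos hy
          have hca : ContinuousAt (fun y => θ k (v y) * fderiv ℝ v y (J y)) x := by
            have hvca : ContinuousAt v x := (hdv x hx).continuousAt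
            have hc1 : ContinuousAt (fun y => θ k (v y)) x := (hθc k).continuousAt.comp hvca
            have hc2 : ContinuousAt (fun y => fderiv ℝ v y (J y)) x :=
              (hcv.clm_apply hJcont).continuousAt (hΩopen.mem_nhds hx)
            exact hc1.mul hc2
          exact hca.congr hev.symm
        · by_cases hx2 : x ∈ closure Ω
          · have hxf : x ∈ frontier Ω := by rw [hΩopen.frontier_eq]; exact ⟨hx2, hx⟩
            obtain ⟨V, hVo, hxV, -, hVg⟩ := hfront x hxf
            have hev : g =ᶠ[nhds x] (fun _ => (0:ℝ)) := by
              filter_upwards [hVo.mem_nhds hxV] with y hy using hVg y hy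
            exact continuousAt_const.congr hev.symm
          · have hev : g =ᶠ[nhds x] (fun _ => (0:ℝ)) := by
              filter_upwards [hclos.isClosed.isOpen_compl.mem_nhds hx2] with y hy
              rw [hgdef]; exact if_neg fun h => hy (hΩsub h)
            exact continuousAt_const.congr hev.symm
      have hgsupp : HasCompactSupport g := HasCompactSupport.intro hclos fun x hx => by
        rw [hgdef]; exact if_neg fun h => hx (hΩsub h)
      have hgint : Integrable g := hgc.integrable_of_hasCompactSupport hgsupp
      have hFint : Integrable (fun x => ∑ i, Fk' x (EuclideanSpace.single i 1) i) := by
        have heq : (fun x => ∑ i, Fk' x (EuclideanSpace.single i 1) i) = g := funext hdivk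
        rw [heq]; exact hgint
      have hdivzero := aux_div Fk Fk' hFd hclos
        (fun x hx => by rw [hFk]; exact if_neg fun h => hx (hΩsub h)) hFint
      have e1 : (∫ x, ∑ i, Fk' x (EuclideanSpace.single i 1) i) = ∫ x, g x := by
        rw [funext hdivk]
      have e2 : (∫ x, g x) = ∫ x in Ω, g x :=
        (setIntegral_eq_integral_of_forall_compl_eq_zero fun x hx => by
          rw [hgdef]; exact if_neg hx).symm
      have e3 : (∫ x in Ω, g x) = ∫ x in Ω, θ k (v x) * fderiv ℝ v x (J x) :=
        setIntegral_congr_fun hmeas fun x hx => by rw [hgdef]; exact if_pos hx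
      rw [← e3, ← e2, ← e1, hdivzero]
    -- dominated convergence
    have hN := aux_null hΩopen hdv hcv (hvcont.mono hΩsub)
    have haeN : ∀ᵐ x ∂(volume.restrict Ω), ¬(x ∈ Ω ∧ v x = 0 ∧ fderiv ℝ v x ≠ 0) := by
      refine ae_restrict_of_ae ?_
      exact measure_eq_zero_iff_ae_notMem.1 hN
    have hmeask : ∀ k : ℕ, AEStronglyMeasurable (fun x => θ k (v x) * fderiv ℝ v x (J x))
        (volume.restrict Ω) := fun k =>
      (((hθc k).comp_continuousOn (hvcont.mono hΩsub)).mul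
        (hcv.clm_apply hJcont)).aestronglyMeasurable hmeas
    have hboundint : Integrable (fun _ : EuclideanSpace ℝ (Fin (m+1)) => |Cv| * |Ca|)
        (volume.restrict Ω) := integrableOn_const hμΩ.ne
    have hboundae : ∀ k : ℕ, ∀ᵐ x ∂(volume.restrict Ω),
        ‖θ k (v x) * fderiv ℝ v x (J x)‖ ≤ |Cv| * |Ca| := by
      intro k
      rw [ae_restrict_iff' hmeas]
      refine Filter.Eventually.of_forall fun x hx => ?_
      have h1 := hbnd v Cv hCv x hx
      rw [Real.norm_eq_abs, abs_mul]
      calc |θ k (v x)| * |fderiv ℝ v x (J x)| ≤ 1 * (|Cv| * |Ca|) :=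
          mul_le_mul (hθb k (v x)) h1 (abs_nonneg _) zero_le_one
        _ = |Cv| * |Ca| := one_mul _
    have hconv : ∀ᵐ x ∂(volume.restrict Ω), Filter.Tendsto
        (fun k => θ k (v x) * fderiv ℝ v x (J x)) Filter.atTop
        (nhds (fderiv ℝ v x (J x))) := by
      filter_upwards [haeN, ae_restrict_mem hmeas] with x hxN hxΩ
      by_cases hvx : v x = 0
      · have hfv : fderiv ℝ v x = 0 := by
          by_contra hne
          exact hxN ⟨hxΩ, hvx, hne⟩
        rw [hfv]
        simp only [ContinuousLinearMap.zero_apply, mul_zero]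
        exact tendsto_const_nhds
      · have hpos : 0 < |v x| := abs_pos.2 hvx
        refine Filter.Tendsto.congr' ?_ tendsto_const_nhds
        refine Filter.eventually_atTop.2 ⟨⌈2/|v x|⌉₊, fun k hk => ?_⟩
        have h1 : 2/|v x| ≤ (k:ℝ) := le_trans (Nat.le_ceil _) (Nat.cast_le.2 hk)
        have h2 : 2 * (1/((k:ℝ)+1)) ≤ |v x| := by
          rw [div_le_iff₀ hpos] at h1
          rw [mul_one_div, div_le_iff₀ (show (0:ℝ) < (k:ℝ)+1 by positivity)]
          nlinarith
        show fderiv ℝ v x (J x) = θ k (v x) * fderiv ℝ v x (J x)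
        rw [hθ1 k (v x) h2, one_mul]
    have hDCT := tendsto_integral_of_dominated_convergence (μ := volume.restrict Ω)
      (F := fun k x => θ k (v x) * fderiv ℝ v x (J x)) (f := fun x => fderiv ℝ v x (J x))
      (fun _ => |Cv| * |Ca|) hmeask hboundint hboundae hconv
    have h0' : Filter.Tendsto (fun k : ℕ => ∫ x in Ω, θ k (v x) * fderiv ℝ v x (J x))
        Filter.atTop (nhds 0) := by
      simp only [hzerok]
      exact tendsto_const_nhds
    exact tendsto_nhds_unique hDCT h0'
  -- final assembly
  have h1 : ∫ x in Ω, a x * ‖gradient u x‖ = ∫ x in Ω, fderiv ℝ u x (J x) :=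
    setIntegral_congr_fun hmeas fun x hx => by rw [← hcalib x hx, hgradinner]
  have h2 : (∫ x in Ω, fderiv ℝ w x (J x)) - ∫ x in Ω, fderiv ℝ u x (J x) =
      ∫ x in Ω, fderiv ℝ v x (J x) := by
    rw [← integral_sub hIfw hIfu]
    refine setIntegral_congr_fun hmeas fun x hx => ?_
    have hfv : fderiv ℝ v x = fderiv ℝ w x - fderiv ℝ u x := fderiv_sub (hdw x hx) (hdu x hx)
    rw [hfv]
    simp
  have h3 : ∫ x in Ω, fderiv ℝ w x (J x) ≤ ∫ x in Ω, a x * ‖gradient w x‖ := by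
    refine setIntegral_mono_on hIfw hIw hmeas fun x hx => ?_
    have hin := real_inner_le_norm (J x) (gradient w x)
    rw [hgradinner] at hin
    calc fderiv ℝ w x (J x) ≤ ‖J x‖ * ‖gradient w x‖ := hin
      _ = a x * ‖gradient w x‖ := by rw [hJa x (hΩsub hx)]
  rw [h1]
  have h4 : ∫ x in Ω, fderiv ℝ u x (J x) = ∫ x in Ω, fderiv ℝ w x (J x) := by linarith
  rw [h4]
  exact h3
end

section
/- Let n ≥ 2 and let A = { x ∈ ℝⁿ : 1 < |x| < 2 } be an annulus. For every u ∈ C¹(closure(A)) with u = c₁ on the sphere {|x| = 1} and u = c₂ on {|x| = 2}, one has ∫_A |x|^{1−n} |∇u(x)| dx ≥ ω_{n−1} |c₂ − c₁|, where ω_{n−1} is the (n−1)-dimensional measure of the unit sphere in ℝⁿ. Moreover, equality holds for u(x) = g(|x|) whenever g : [1,2] → ℝ is C¹ and monotone with g(1) = c₁, g(2) = c₂. -/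
open MeasureTheory

open Set Metric in
theorem closure_annulus {E : Type*} [NormedAddCommGroup E] [NormedSpace ℝ E] :
    closure {x : E | 1 < ‖x‖ ∧ ‖x‖ < 2} = {x : E | 1 ≤ ‖x‖ ∧ ‖x‖ ≤ 2} := by
  apply Subset.antisymm
  · refine closure_minimal (fun x hx => ⟨hx.1.le, hx.2.le⟩) ?_
    exact (isClosed_le continuous_const continuous_norm).inter
      (isClosed_le continuous_norm continuous_const)
  · rintro x ⟨h1, h2⟩
    have hx0 : (0:ℝ) < ‖x‖ := lt_of_lt_of_le one_pos h1
    have hcont : Filter.Tendsto (fun t : ℝ => ((1-t) + t*(3/2)/‖x‖) • x) (nhdsWithin 0 (Ioi 0)) (nhds x) := by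
      have hc : Continuous (fun t : ℝ => ((1-t) + t*(3/2)/‖x‖) • x) := by fun_prop
      have h0 := hc.tendsto 0
      simp only [sub_zero, zero_mul, zero_div, add_zero, one_smul] at h0
      exact h0.mono_left nhdsWithin_le_nhds
    refine mem_closure_of_tendsto hcont ?_
    filter_upwards [Ioo_mem_nhdsGT_of_mem (by norm_num : (0:ℝ) ∈ Ico 0 1)] with t ht
    have ht0 : 0 < t := ht.1
    have ht1 : t < 1 := ht.2
    have h1t : (0:ℝ) < 1 - t := by linarith
    have hc : 0 < (1-t) + t*(3/2)/‖x‖ := by positivity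
    have hnorm : ‖((1-t) + t*(3/2)/‖x‖) • x‖ = (1-t)*‖x‖ + t*(3/2) := by
      rw [norm_smul, Real.norm_eq_abs, abs_of_pos hc]
      field_simp
    constructor <;> simp only [Set.mem_setOf_eq, hnorm] <;> nlinarith

open Set Metric in
theorem uniqueDiffOn_annulus {E : Type*} [NormedAddCommGroup E] [NormedSpace ℝ E] :
    UniqueDiffOn ℝ {x : E | 1 ≤ ‖x‖ ∧ ‖x‖ ≤ 2} := by
  rintro x ⟨h1, h2⟩
  have hx0 : (0:ℝ) < ‖x‖ := lt_of_lt_of_le one_pos h1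
  set y : E := ((3/2)/‖x‖) • x with hy
  have hny : ‖y‖ = 3/2 := by
    rw [hy, norm_smul, Real.norm_eq_abs, abs_of_pos (by positivity)]
    field_simp
  set C : Set E := convexHull ℝ (insert x (closedBall y (1/4))) with hC
  have hCconv : Convex ℝ C := convex_convexHull _ _
  have hxC : x ∈ C := subset_convexHull _ _ (mem_insert _ _)
  have hball : ball y (1/4) ⊆ interior C := by
    refine interior_maximal ?_ isOpen_ball
    exact (ball_subset_closedBall.trans ((subset_insert _ _).trans (subset_convexHull _ _)))
  have hint : (interior C).Nonempty := ⟨y, hball (mem_ball_self (by norm_num))⟩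
  have hCsub : C ⊆ {x : E | 1 ≤ ‖x‖ ∧ ‖x‖ ≤ 2} := by
    rw [hC, convexHull_insert ⟨y, mem_closedBall_self (by norm_num)⟩,
      (convex_closedBall y (1/4)).convexHull_eq]
    rintro w hw
    rw [mem_convexJoin] at hw
    obtain ⟨x'', hx'', z, hz, hw⟩ := hw
    rw [mem_singleton_iff] at hx''
    rw [hx''] at hw
    obtain ⟨a, b, ha, hb, hab, rfl⟩ := hw
    rw [mem_closedBall_iff_norm] at hz
    have hnz : ‖z‖ ≤ 7/4 := by
      calc ‖z‖ = ‖y + (z - y)‖ := by rw [show y + (z - y) = z from by abel]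
      _ ≤ ‖y‖ + ‖z - y‖ := norm_add_le _ _
      _ ≤ 3/2 + 1/4 := by rw [hny]; linarith
      _ = 7/4 := by norm_num
    have key : a • x + b • z = (a + b*(3/2)/‖x‖) • x + b • (z - y) := by
      rw [hy, smul_sub, smul_smul, add_smul]
      rw [show b * (3/2/‖x‖) = b * (3/2)/‖x‖ by ring]
      abel
    have hup : ‖a • x + b • z‖ ≤ 2 := by
      calc ‖a • x + b • z‖ ≤ ‖a • x‖ + ‖b • z‖ := norm_add_le _ _
      _ = a * ‖x‖ + b * ‖z‖ := by
          rw [norm_smul, norm_smul, Real.norm_eq_abs, Real.norm_eq_abs,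
            abs_of_nonneg ha, abs_of_nonneg hb]
      _ ≤ 2 := by nlinarith
    have hmid : ‖(a + b*(3/2)/‖x‖) • x‖ = a*‖x‖ + (3/2)*b := by
      rw [norm_smul, Real.norm_eq_abs, abs_of_nonneg (by positivity)]
      field_simp
    have hlow : 1 ≤ ‖a • x + b • z‖ := by
      have h3 : ‖b • (z - y)‖ ≤ b * (1/4) := by
        rw [norm_smul, Real.norm_eq_abs, abs_of_nonneg hb]
        exact mul_le_mul_of_nonneg_left hz hb
      have h4 : ‖(a + b*(3/2)/‖x‖) • x‖ - ‖b • (z - y)‖ ≤ ‖a • x + b • z‖ := by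
        rw [key]
        have h5 := norm_add_le ((a + b*(3/2)/‖x‖) • x + b • (z - y)) (-(b • (z - y)))
        simp only [add_neg_cancel_right, norm_neg] at h5
        linarith
      rw [hmid] at h4
      nlinarith
    exact ⟨hlow, hup⟩
  exact (uniqueDiffWithinAt_convex hCconv hint (subset_closure hxC)).mono hCsub

open Set Metric in

theorem hasFDerivAt_norm' {E : Type*} [NormedAddCommGroup E] [InnerProductSpace ℝ E]
    {x : E} (hx : x ≠ 0) :
    HasFDerivAt (fun y : E => ‖y‖) (‖x‖⁻¹ • innerSL ℝ x) x := by
  have hinner : HasFDerivAt (fun y : E => (inner ℝ y y : ℝ))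
      ((fderivInnerCLM ℝ (x, x)).comp ((ContinuousLinearMap.id ℝ E).prod
        (ContinuousLinearMap.id ℝ E))) x :=
    (hasFDerivAt_id x).inner ℝ (hasFDerivAt_id x)
  have ht0 : (inner ℝ x x : ℝ) ≠ 0 := by
    simpa using (inner_self_ne_zero (𝕜 := ℝ) (E := E)).2 hx
  have hsqrt := HasDerivAt.comp_hasFDerivAt (f := fun y : E => (inner ℝ y y : ℝ)) x (Real.hasDerivAt_sqrt ht0) hinner
  have hnx : Real.sqrt (inner ℝ x x : ℝ) = ‖x‖ := by
    rw [real_inner_self_eq_norm_mul_norm, Real.sqrt_mul_self (norm_nonneg x)]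
  have hfun : (fun y : E => Real.sqrt (inner ℝ y y : ℝ)) = fun y : E => ‖y‖ := by
    funext y
    rw [real_inner_self_eq_norm_mul_norm, Real.sqrt_mul_self (norm_nonneg y)]
  rw [Function.comp_def, hfun] at hsqrt
  refine hsqrt.congr_fderiv ?_
  ext v
  simp only [ContinuousLinearMap.smul_apply, innerSL_apply_apply, ContinuousLinearMap.coe_smul',
    Pi.smul_apply, ContinuousLinearMap.coe_comp', Function.comp_apply,
    ContinuousLinearMap.prod_apply, ContinuousLinearMap.coe_id', id_eq, fderivInnerCLM_apply,
    smul_eq_mul, hnx]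
  rw [real_inner_comm v x]
  have : ‖x‖ ≠ 0 := norm_ne_zero_iff.2 hx
  field_simp
  ring

theorem norm_gradient_radial {E : Type*} [NormedAddCommGroup E] [InnerProductSpace ℝ E]
    [CompleteSpace E] {g : ℝ → ℝ} (hg : Differentiable ℝ g) {x : E} (hx : x ≠ 0) :
    ‖gradient (fun y : E => g ‖y‖) x‖ = |deriv g ‖x‖| := by
  have hcomp := HasDerivAt.comp_hasFDerivAt (f := fun y : E => ‖y‖) x
    ((hg ‖x‖).hasDerivAt) (hasFDerivAt_norm' hx)
  rw [Function.comp_def] at hcomp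
  have hf : fderiv ℝ (fun y : E => g ‖y‖) x = (deriv g ‖x‖) • (‖x‖⁻¹ • innerSL ℝ x) :=
    hcomp.fderiv
  have hnx : ‖x‖ ≠ 0 := norm_ne_zero_iff.2 hx
  simp only [gradient, hf, LinearIsometryEquiv.norm_map]
  rw [norm_smul, norm_smul, innerSL_apply_norm, Real.norm_eq_abs, Real.norm_eq_abs,
    abs_inv, abs_norm, inv_mul_cancel₀ hnx, mul_one]

theorem norm_gradient_eq_norm_fderiv {E : Type*} [NormedAddCommGroup E] [InnerProductSpace ℝ E]
    [CompleteSpace E] (f : E → ℝ) (x : E) : ‖gradient f x‖ = ‖fderiv ℝ f x‖ := by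
  simp only [gradient, LinearIsometryEquiv.norm_map]

open Set Metric in
theorem key1d (φ : ℝ → ℝ) (ψ : ℝ → ℝ) (hcont : ContinuousOn φ (Set.Icc 1 2))
    (hderiv : ∀ r ∈ Set.Ioo (1:ℝ) 2, HasDerivAt φ (deriv φ r) r)
    (hψint : IntegrableOn ψ (Set.Ioo 1 2))
    (hmeas : AEStronglyMeasurable (deriv φ) (volume.restrict (Set.Ioo 1 2)))
    (hbound : ∀ r ∈ Set.Ioo (1:ℝ) 2, |deriv φ r| ≤ ψ r) :
    |φ 2 - φ 1| ≤ ∫ r in Set.Ioo 1 2, ψ r := by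
  have hae : ∀ᵐ r ∂(volume.restrict (Set.Ioo (1:ℝ) 2)), ‖deriv φ r‖ ≤ ψ r := by
    filter_upwards [ae_restrict_mem measurableSet_Ioo] with r hr
    rw [Real.norm_eq_abs]
    exact hbound r hr
  have hint : IntegrableOn (deriv φ) (Set.Ioo 1 2) := Integrable.mono' hψint hmeas hae
  have hIoc : IntegrableOn (deriv φ) (Set.Ioc 1 2) := by
    rwa [IntegrableOn, Measure.restrict_congr_set Ioo_ae_eq_Ioc] at hint
  have hii : IntervalIntegrable (deriv φ) volume 1 2 :=
    (intervalIntegrable_iff_integrableOn_Ioc_of_le (by norm_num)).2 hIoc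
  have hftc := intervalIntegral.integral_eq_sub_of_hasDeriv_right_of_le (by norm_num : (1:ℝ) ≤ 2)
    hcont (fun r hr => (hderiv r hr).hasDerivWithinAt) hii
  calc |φ 2 - φ 1| = |∫ r in (1:ℝ)..2, deriv φ r| := by rw [hftc]
    _ ≤ ∫ r in (1:ℝ)..2, |deriv φ r| := intervalIntegral.abs_integral_le_integral_abs (by norm_num)
    _ = ∫ r in Set.Ioo 1 2, |deriv φ r| := by
        rw [intervalIntegral.integral_of_le (by norm_num : (1:ℝ) ≤ 2), integral_Ioc_eq_integral_Ioo]
    _ ≤ ∫ r in Set.Ioo 1 2, ψ r :=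
        setIntegral_mono_on hint.abs hψint measurableSet_Ioo (fun r hr => hbound r hr)

open Set Metric in
theorem deriv_nonneg_of_monotoneOn {g : ℝ → ℝ} (hg : Differentiable ℝ g)
    (hm : MonotoneOn g (Set.Icc 1 2)) {x : ℝ} (hx : x ∈ Set.Ioo (1:ℝ) 2) : 0 ≤ deriv g x := by
  have hd := (hg x).hasDerivAt
  rw [hasDerivAt_iff_tendsto_slope] at hd
  have hmono : nhdsWithin x (Set.Ioi x) ≤ nhdsWithin x {x}ᶜ :=
    nhdsWithin_mono x (fun y hy => ne_of_gt hy)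
  refine ge_of_tendsto (hd.mono_left hmono) ?_
  filter_upwards [Ioo_mem_nhdsGT_of_mem ⟨le_refl x, hx.2⟩] with y hy
  rw [slope_def_field]
  have hgle : g x ≤ g y := hm ⟨hx.1.le, hx.2.le⟩ ⟨(hx.1.trans hy.1).le, hy.2.le⟩ hy.1.le
  have : 0 < y - x := by linarith [hy.1]
  rw [div_eq_inv_mul]
  exact mul_nonneg (by positivity) (by linarith)

open Set Metric in
theorem polar_chain {E : Type*} [NormedAddCommGroup E] [NormedSpace ℝ E]
    [MeasurableSpace E] [BorelSpace E] [FiniteDimensional ℝ E] [Nontrivial E]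
    (μ : Measure E) [μ.IsAddHaarMeasure]
    (G : E → ℝ) (hG : Integrable G μ) :
    (∫ x, G x ∂μ = ∫ θ : sphere (0:E) 1,
      ∫ r : Set.Ioi (0:ℝ), G (r.1 • θ.1)
        ∂(Measure.volumeIoiPow (Module.finrank ℝ E - 1))
      ∂μ.toSphere) ∧
    Integrable (fun θ : sphere (0:E) 1 =>
      ∫ r : Set.Ioi (0:ℝ), G (r.1 • θ.1)
        ∂(Measure.volumeIoiPow (Module.finrank ℝ E - 1))) μ.toSphere := by
  set e := homeomorphUnitSphereProd E with he
  have mp := μ.measurePreserving_homeomorphUnitSphereProd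
  set g : sphere (0:E) 1 × Set.Ioi (0:ℝ) → ℝ := fun p => G (p.2.1 • p.1.1) with hg
  have hge : ∀ x : ({0}ᶜ : Set E), g (e x) = G x.1 := by
    intro x
    simp only [hg, he, homeomorphUnitSphereProd_apply_snd_coe,
      homeomorphUnitSphereProd_apply_fst_coe]
    rw [smul_inv_smul₀ (norm_ne_zero_iff.2 x.2)]
  have hgint : Integrable g ((μ.toSphere).prod
      (Measure.volumeIoiPow (Module.finrank ℝ E - 1))) := by
    rw [← mp.integrable_comp_emb (Homeomorph.measurableEmbedding e)]
    have h1 : (g ∘ e) = fun x : ({0}ᶜ : Set E) => G x.1 := funext hge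
    rw [h1]
    have hmap : Measure.map Subtype.val (μ.comap Subtype.val)
        = μ.restrict ({0}ᶜ : Set E) :=
      map_comap_subtype_coe (measurableSet_singleton (0:E)).compl _
    have h2 : Integrable G (Measure.map (Subtype.val : ({0}ᶜ : Set E) → E)
        (μ.comap Subtype.val)) := by
      rw [hmap]
      exact hG.restrict
    exact ((MeasurableEmbedding.subtype_coe
      (measurableSet_singleton (0:E)).compl).integrable_map_iff).1 h2
  refine ⟨?_, hgint.integral_prod_left⟩
  calc ∫ x, G x ∂μ = ∫ x in ({0}ᶜ : Set E), G x ∂μ := by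
        rw [restrict_compl_singleton]
    _ = ∫ x : ({0}ᶜ : Set E), G x.1 ∂(μ.comap Subtype.val) :=
        (integral_subtype_comap (measurableSet_singleton (0:E)).compl G).symm
    _ = ∫ x : ({0}ᶜ : Set E), g (e x) ∂(μ.comap Subtype.val) := by
        congr 1
        exact (funext hge).symm
    _ = ∫ p, g p ∂(μ.toSphere.prod (Measure.volumeIoiPow (Module.finrank ℝ E - 1))) :=
        mp.integral_comp (Homeomorph.measurableEmbedding e) g
    _ = _ := integral_prod g hgint

open Set Metric in
theorem inner_eval {E : Type*} [NormedAddCommGroup E] [NormedSpace ℝ E]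
    {n : ℕ} (hn : 2 ≤ n) (A : Set E) (hA : A = {x : E | 1 < ‖x‖ ∧ ‖x‖ < 2})
    (h : E → ℝ) (θ : E) (hθ : ‖θ‖ = 1) :
    ∫ r : Set.Ioi (0:ℝ), (Set.indicator A (fun x => ‖x‖ ^ ((1:ℝ) - n) * h x)) (r.1 • θ)
      ∂(Measure.volumeIoiPow (n - 1))
    = ∫ r in Set.Ioo (1:ℝ) 2, h (r • θ) := by
  rw [Measure.volumeIoiPow]
  simp only [ENNReal.ofReal]
  rw [integral_withDensity_eq_integral_smul ((measurable_subtype_coe.pow_const _).real_toNNReal)]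
  rw [integral_subtype_comap measurableSet_Ioi (fun r : ℝ =>
    (Real.toNNReal (r^(n-1))) • (Set.indicator A (fun x => ‖x‖ ^ ((1:ℝ) - n) * h x)) (r • θ))]
  rw [setIntegral_congr_fun measurableSet_Ioi
    (g := fun r => Set.indicator (Set.Ioo (1:ℝ) 2) (fun r => h (r • θ)) r) ?_]
  · rw [setIntegral_indicator measurableSet_Ioo,
      show Set.Ioi (0:ℝ) ∩ Set.Ioo 1 2 = Set.Ioo 1 2 from
        Set.inter_eq_self_of_subset_right (fun y hy => lt_trans one_pos hy.1)]
  · intro r hr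
    have hr0 : (0:ℝ) < r := hr
    have hnorm : ‖r • θ‖ = r := by
      rw [norm_smul, Real.norm_eq_abs, abs_of_pos hr0, hθ, mul_one]
    by_cases hmem : r ∈ Set.Ioo (1:ℝ) 2
    · have hxA : r • θ ∈ A := by rw [hA]; exact ⟨by rw [hnorm]; exact hmem.1, by rw [hnorm]; exact hmem.2⟩
      simp only [Set.indicator_of_mem hxA, Set.indicator_of_mem hmem, NNReal.smul_def,
        Real.coe_toNNReal _ (pow_nonneg hr0.le _), hnorm, smul_eq_mul]
      rw [← Real.rpow_natCast r (n-1), ← mul_assoc, ← Real.rpow_add hr0,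
        show ((n - 1 : ℕ) : ℝ) + ((1:ℝ) - n) = 0 by
          rw [Nat.cast_sub (by omega)]; push_cast; ring,
        Real.rpow_zero, one_mul]
    · have hxA : r • θ ∉ A := by
        rw [hA]
        intro hc
        exact hmem ⟨by rw [← hnorm]; exact hc.1, by rw [← hnorm]; exact hc.2⟩
      simp only [Set.indicator_of_notMem hxA, Set.indicator_of_notMem hmem, smul_zero]

open Set Metric in
theorem part1 (n : ℕ) (hn : 2 ≤ n)
    (A : Set (EuclideanSpace ℝ (Fin n)))
    (hA : A = {x : EuclideanSpace ℝ (Fin n) | 1 < ‖x‖ ∧ ‖x‖ < 2})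
    (ω : ℝ)
    (hω : ω = n * (volume (Metric.ball (0 : EuclideanSpace ℝ (Fin n)) 1)).toReal)
    (c₁ c₂ : ℝ) (u : EuclideanSpace ℝ (Fin n) → ℝ) (hu : ContDiffOn ℝ 1 u (closure A))
    (hb1 : ∀ x, ‖x‖ = 1 → u x = c₁) (hb2 : ∀ x, ‖x‖ = 2 → u x = c₂) :
    ω * |c₂ - c₁| ≤ ∫ x in A, ‖x‖ ^ ((1:ℝ) - n) * ‖gradient u x‖ := by
  haveI : Nontrivial (EuclideanSpace ℝ (Fin n)) := by
    have h1 : ‖(EuclideanSpace.single (⟨0, by omega⟩ : Fin n) (1:ℝ))‖ = 1 := by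
      simp [EuclideanSpace.norm_single]
    refine nontrivial_of_ne (EuclideanSpace.single (⟨0, by omega⟩ : Fin n) (1:ℝ)) 0 ?_
    intro h
    rw [h, norm_zero] at h1
    norm_num at h1
  have hAopen : IsOpen A := by
    rw [hA]
    exact (isOpen_lt continuous_const continuous_norm).inter
      (isOpen_lt continuous_norm continuous_const)
  have hAmeas : MeasurableSet A := hAopen.measurableSet
  have hclos : closure A = {x : EuclideanSpace ℝ (Fin n) | 1 ≤ ‖x‖ ∧ ‖x‖ ≤ 2} := by
    rw [hA]; exact closure_annulus
  have hUD : UniqueDiffOn ℝ (closure A) := by rw [hclos]; exact uniqueDiffOn_annulus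
  have hdim : Module.finrank ℝ (EuclideanSpace ℝ (Fin n)) = n := finrank_euclideanSpace_fin
  -- replace gradient by fderiv
  simp only [norm_gradient_eq_norm_fderiv]
  set F : EuclideanSpace ℝ (Fin n) → ℝ := fun x => ‖x‖ ^ ((1:ℝ) - n) * ‖fderiv ℝ u x‖ with hF
  -- compactness bound
  have hK : IsCompact (closure A) := by
    refine (isCompact_closedBall (0:EuclideanSpace ℝ (Fin n)) 2).of_isClosed_subset
      isClosed_closure ?_
    rw [hclos]
    intro x hx
    exact mem_closedBall_zero_iff.2 hx.2
  have hcf : ContinuousOn (fderivWithin ℝ u (closure A)) (closure A) :=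
    hu.continuousOn_fderivWithin hUD le_rfl
  obtain ⟨M, hM⟩ := hK.exists_bound_of_continuousOn hcf
  set M' : ℝ := max M 0 with hM'
  have hM'0 : 0 ≤ M' := le_max_right _ _
  have hfederiv : ∀ x ∈ A, ‖fderiv ℝ u x‖ ≤ M' := by
    intro x hx
    have hnb : closure A ∈ nhds x := mem_nhds_iff.mpr ⟨A, subset_closure, hAopen, hx⟩
    rw [← fderivWithin_of_mem_nhds hnb]
    exact le_trans (hM x (subset_closure hx)) (le_max_left _ _)
  have hdiffA : ∀ x ∈ A, DifferentiableAt ℝ u x := by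
    intro x hx
    exact ((hu.differentiableOn one_ne_zero) x (subset_closure hx)).differentiableAt
      (mem_nhds_iff.mpr ⟨A, subset_closure, hAopen, hx⟩)
  have hFalt : F = fun x => (‖x‖^(n-1:ℕ))⁻¹ * ‖fderiv ℝ u x‖ := by
    funext x
    simp only [hF]
    rw [show ((1:ℝ) - n) = -((n-1:ℕ):ℝ) by rw [Nat.cast_sub (by omega)]; push_cast; ring,
      Real.rpow_neg (norm_nonneg x), Real.rpow_natCast]
  have hFmeas : Measurable F := by
    rw [hFalt]
    exact ((measurable_norm.pow_const _).inv).mul ((measurable_fderiv ℝ u).norm)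
  have hintOn : IntegrableOn F A := by
    refine Measure.integrableOn_of_bounded (M := M') ?_ hFmeas.aestronglyMeasurable ?_
    · refine ne_of_lt (lt_of_le_of_lt
        (measure_mono (show A ⊆ ball (0 : EuclideanSpace ℝ (Fin n)) 2 from ?_))
        measure_ball_lt_top)
      rw [hA]; intro x hx; exact mem_ball_zero_iff.2 hx.2
    · filter_upwards [ae_restrict_mem hAmeas] with x hx
      have hx1 : 1 ≤ ‖x‖ := by rw [hA] at hx; exact hx.1.le
      have h1 : ‖x‖ ^ ((1:ℝ) - n) ≤ 1 :=
        Real.rpow_le_one_of_one_le_of_nonpos hx1 (by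
          have : (2:ℝ) ≤ n := by exact_mod_cast hn
          linarith)
      have h2 : (0:ℝ) ≤ ‖x‖ ^ ((1:ℝ) - n) := Real.rpow_nonneg (norm_nonneg x) _
      rw [Real.norm_eq_abs, abs_of_nonneg (mul_nonneg h2 (norm_nonneg _))]
      calc ‖x‖ ^ ((1:ℝ) - n) * ‖fderiv ℝ u x‖ ≤ 1 * ‖fderiv ℝ u x‖ :=
            mul_le_mul_of_nonneg_right h1 (norm_nonneg _)
        _ = ‖fderiv ℝ u x‖ := one_mul _
        _ ≤ M' := hfederiv x hx
  have hGint : Integrable (Set.indicator A F) volume := (integrable_indicator_iff hAmeas).2 hintOn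
  obtain ⟨hchain, hinner_int⟩ := polar_chain volume (Set.indicator A F) hGint
  rw [hdim] at hchain hinner_int
  have hkey : ∀ θ : sphere (0:EuclideanSpace ℝ (Fin n)) 1,
      |c₂ - c₁| ≤ ∫ r : Set.Ioi (0:ℝ), (Set.indicator A F) (r.1 • θ.1)
        ∂(Measure.volumeIoiPow (n - 1)) := by
    intro θ
    have hθ : ‖θ.1‖ = 1 := mem_sphere_zero_iff_norm.1 θ.2
    rw [hF, inner_eval hn A hA (fun x => ‖fderiv ℝ u x‖) θ.1 hθ]
    set φ : ℝ → ℝ := fun r => u (r • θ.1) with hφ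
    have hmemA : ∀ r ∈ Set.Ioo (1:ℝ) 2, r • θ.1 ∈ A := by
      intro r hr
      rw [hA]
      have : ‖r • θ.1‖ = r := by
        rw [norm_smul, Real.norm_eq_abs, abs_of_pos (lt_trans one_pos hr.1), hθ, mul_one]
      exact ⟨by rw [this]; exact hr.1, by rw [this]; exact hr.2⟩
    have hd : ∀ r ∈ Set.Ioo (1:ℝ) 2, HasDerivAt φ ((fderiv ℝ u (r • θ.1)) θ.1) r := by
      intro r hr
      have h1 := (hdiffA _ (hmemA r hr)).hasFDerivAt.comp_hasDerivAt r
        ((hasDerivAt_id r).smul_const θ.1)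
      simp only [one_smul] at h1
      exact h1
    have hderiv' : ∀ r ∈ Set.Ioo (1:ℝ) 2, HasDerivAt φ (deriv φ r) r := fun r hr =>
      (hd r hr).deriv ▸ hd r hr
    have hbound : ∀ r ∈ Set.Ioo (1:ℝ) 2, |deriv φ r| ≤ ‖fderiv ℝ u (r • θ.1)‖ := by
      intro r hr
      rw [(hd r hr).deriv, ← Real.norm_eq_abs]
      calc ‖(fderiv ℝ u (r • θ.1)) θ.1‖ ≤ ‖fderiv ℝ u (r • θ.1)‖ * ‖θ.1‖ :=
            (fderiv ℝ u (r • θ.1)).le_opNorm θ.1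
        _ = ‖fderiv ℝ u (r • θ.1)‖ := by rw [hθ, mul_one]
    have hψint : IntegrableOn (fun r => ‖fderiv ℝ u (r • θ.1)‖) (Set.Ioo (1:ℝ) 2) := by
      refine Measure.integrableOn_of_bounded (M := M') (ne_of_lt measure_Ioo_lt_top)
        (((measurable_fderiv ℝ u).comp
          ((continuous_id.smul continuous_const).measurable)).norm).aestronglyMeasurable ?_
      filter_upwards [ae_restrict_mem measurableSet_Ioo] with r hr
      rw [norm_norm]
      exact hfederiv _ (hmemA r hr)
    have hcont : ContinuousOn φ (Set.Icc 1 2) := by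
      refine (hu.continuousOn).comp ((continuous_id.smul (continuous_const (y := θ.1)))).continuousOn ?_
      intro r hr
      rw [hclos]
      have : ‖r • θ.1‖ = r := by
        rw [norm_smul, Real.norm_eq_abs, abs_of_pos (lt_of_lt_of_le one_pos hr.1), hθ, mul_one]
      exact ⟨by rw [this]; exact hr.1, by rw [this]; exact hr.2⟩
    have hφ1 : φ 1 = c₁ := by
      rw [hφ]
      simp only [one_smul]
      exact hb1 θ.1 hθ
    have hφ2 : φ 2 = c₂ := by
      refine hb2 _ ?_
      rw [norm_smul, Real.norm_eq_abs, abs_of_pos two_pos, hθ, mul_one]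
    have := key1d φ (fun r => ‖fderiv ℝ u (r • θ.1)‖) hcont hderiv' hψint
      ((measurable_deriv φ).aestronglyMeasurable.restrict) hbound
    rwa [hφ1, hφ2] at this
  have hconst : ∫ _ : sphere (0:EuclideanSpace ℝ (Fin n)) 1, |c₂ - c₁|
      ∂(volume : Measure (EuclideanSpace ℝ (Fin n))).toSphere
      = ω * |c₂ - c₁| := by
    rw [integral_const, smul_eq_mul, hω]
    congr 1
    rw [measureReal_def, Measure.toSphere_apply_univ, hdim, ENNReal.toReal_mul]
    simp
  calc ω * |c₂ - c₁| = ∫ _ : sphere (0:EuclideanSpace ℝ (Fin n)) 1, |c₂ - c₁|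
        ∂(volume : Measure (EuclideanSpace ℝ (Fin n))).toSphere := hconst.symm
    _ ≤ ∫ θ : sphere (0:EuclideanSpace ℝ (Fin n)) 1,
        ∫ r : Set.Ioi (0:ℝ), (Set.indicator A F) (r.1 • θ.1)
          ∂(Measure.volumeIoiPow (n - 1))
        ∂(volume : Measure (EuclideanSpace ℝ (Fin n))).toSphere :=
        integral_mono (integrable_const _) hinner_int hkey
    _ = ∫ x, Set.indicator A F x := hchain.symm
    _ = ∫ x in A, F x := integral_indicator hAmeas

open Set Metric in
theorem part2 (n : ℕ) (hn : 2 ≤ n)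
    (A : Set (EuclideanSpace ℝ (Fin n)))
    (hA : A = {x : EuclideanSpace ℝ (Fin n) | 1 < ‖x‖ ∧ ‖x‖ < 2})
    (ω : ℝ)
    (hω : ω = n * (volume (Metric.ball (0 : EuclideanSpace ℝ (Fin n)) 1)).toReal)
    (c₁ c₂ : ℝ) (g : ℝ → ℝ) (hg : ContDiff ℝ 1 g)
    (hmono : MonotoneOn g (Set.Icc 1 2) ∨ AntitoneOn g (Set.Icc 1 2))
    (hg1 : g 1 = c₁) (hg2 : g 2 = c₂) :
    ∫ x in A, ‖x‖ ^ ((1:ℝ) - n) * ‖gradient (fun y : EuclideanSpace ℝ (Fin n) => g ‖y‖) x‖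
        = ω * |c₂ - c₁| := by
  haveI : Nontrivial (EuclideanSpace ℝ (Fin n)) := by
    have h1 : ‖(EuclideanSpace.single (⟨0, by omega⟩ : Fin n) (1:ℝ))‖ = 1 := by
      simp [EuclideanSpace.norm_single]
    refine nontrivial_of_ne (EuclideanSpace.single (⟨0, by omega⟩ : Fin n) (1:ℝ)) 0 ?_
    intro h
    rw [h, norm_zero] at h1
    norm_num at h1
  have hAmeas : MeasurableSet A := by
    rw [hA]
    exact ((isOpen_lt continuous_const continuous_norm).inter
      (isOpen_lt continuous_norm continuous_const)).measurableSet
  have hdg : Differentiable ℝ g := hg.differentiable one_ne_zero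
  have hkey : (fun x : EuclideanSpace ℝ (Fin n) => Set.indicator A
      (fun x => ‖x‖ ^ ((1:ℝ) - n) * ‖gradient (fun y : EuclideanSpace ℝ (Fin n) => g ‖y‖) x‖) x)
      = fun x : EuclideanSpace ℝ (Fin n) => Set.indicator (Set.Ioo 1 2)
        (fun r => r ^ ((1:ℝ) - n) * |deriv g r|) ‖x‖ := by
    funext x
    by_cases hx : ‖x‖ ∈ Set.Ioo (1:ℝ) 2
    · have hxA : x ∈ A := by rw [hA]; exact ⟨hx.1, hx.2⟩
      have hx0 : x ≠ 0 := by
        intro h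
        rw [h, norm_zero] at hx
        exact absurd hx.1 (by norm_num)
      rw [Set.indicator_of_mem hxA, Set.indicator_of_mem hx, norm_gradient_radial hdg hx0]
    · have hxA : x ∉ A := by rw [hA]; exact fun h => hx ⟨h.1, h.2⟩
      rw [Set.indicator_of_notMem hxA, Set.indicator_of_notMem hx]
  have hdim : Module.finrank ℝ (EuclideanSpace ℝ (Fin n)) = n := finrank_euclideanSpace_fin
  have step1 : ∫ x in A, ‖x‖ ^ ((1:ℝ) - n) *
        ‖gradient (fun y : EuclideanSpace ℝ (Fin n) => g ‖y‖) x‖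
      = n • (volume (Metric.ball (0:EuclideanSpace ℝ (Fin n)) 1)).toReal •
        ∫ y in Set.Ioi (0:ℝ), y ^ (n-1) •
          Set.indicator (Set.Ioo 1 2) (fun r => r ^ ((1:ℝ) - n) * |deriv g r|) y := by
    rw [← integral_indicator hAmeas, hkey,
      integral_fun_norm_addHaar volume
        (fun r => Set.indicator (Set.Ioo 1 2) (fun r => r ^ ((1:ℝ) - n) * |deriv g r|) r), hdim, measureReal_def]
  have hcd : Continuous (deriv g) := hg.continuous_deriv le_rfl
  have step2 : ∫ y in Set.Ioi (0:ℝ), y ^ (n-1) •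
        Set.indicator (Set.Ioo 1 2) (fun r => r ^ ((1:ℝ) - n) * |deriv g r|) y
      = ∫ y in Set.Ioo (1:ℝ) 2, |deriv g y| := by
    rw [setIntegral_congr_fun measurableSet_Ioi
      (g := fun y => Set.indicator (Set.Ioo (1:ℝ) 2) (fun y => |deriv g y|) y) ?_]
    · rw [setIntegral_indicator measurableSet_Ioo,
        show Set.Ioi (0:ℝ) ∩ Set.Ioo 1 2 = Set.Ioo 1 2 from
          Set.inter_eq_self_of_subset_right (fun y hy => lt_trans one_pos hy.1)]
    · intro y hy
      have hy0 : (0:ℝ) < y := hy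
      by_cases hmem : y ∈ Set.Ioo (1:ℝ) 2
      · simp only [Set.indicator_of_mem hmem, smul_eq_mul]
        rw [← Real.rpow_natCast y (n-1), ← mul_assoc, ← Real.rpow_add hy0,
          show ((n - 1 : ℕ) : ℝ) + ((1:ℝ) - n) = 0 by
            rw [Nat.cast_sub (by omega)]; push_cast; ring,
          Real.rpow_zero, one_mul]
      · simp only [Set.indicator_of_notMem hmem, smul_zero]
  have hii : IntervalIntegrable (deriv g) volume 1 2 := hcd.intervalIntegrable 1 2
  have hftc : ∫ y in (1:ℝ)..2, deriv g y = c₂ - c₁ := by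
    rw [intervalIntegral.integral_deriv_eq_sub (fun x _ => hdg x) hii, hg1, hg2]
  have step3 : ∫ y in Set.Ioo (1:ℝ) 2, |deriv g y| = |c₂ - c₁| := by
    rcases hmono with hm | hm
    · have h12 : c₁ ≤ c₂ := by
        rw [← hg1, ← hg2]
        exact hm ⟨le_refl 1, by norm_num⟩ ⟨by norm_num, le_refl 2⟩ (by norm_num)
      rw [setIntegral_congr_fun measurableSet_Ioo
        (g := deriv g) (fun y hy => abs_of_nonneg (deriv_nonneg_of_monotoneOn hdg hm hy)),
        ← integral_Ioc_eq_integral_Ioo, ← intervalIntegral.integral_of_le (by norm_num : (1:ℝ) ≤ 2),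
        hftc, abs_of_nonneg (by linarith)]
    · have h12 : c₂ ≤ c₁ := by
        rw [← hg1, ← hg2]
        exact hm ⟨le_refl 1, by norm_num⟩ ⟨by norm_num, le_refl 2⟩ (by norm_num)
      have hderivneg : ∀ y ∈ Set.Ioo (1:ℝ) 2, |deriv g y| = -deriv g y := by
        intro y hy
        have h0 : 0 ≤ deriv (fun x => -g x) y := by
          apply deriv_nonneg_of_monotoneOn hdg.neg _ hy
          intro a ha b hb hab
          simpa using hm ha hb hab
        rw [deriv.fun_neg] at h0
        exact abs_of_nonpos (by linarith)
      rw [setIntegral_congr_fun measurableSet_Ioo (g := fun y => -deriv g y) hderivneg,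
        integral_neg, ← integral_Ioc_eq_integral_Ioo,
        ← intervalIntegral.integral_of_le (by norm_num : (1:ℝ) ≤ 2), hftc,
        abs_of_nonpos (by linarith)]
  rw [step1, step2, step3, nsmul_eq_mul, smul_eq_mul, hω, mul_assoc]

/-- on the annulus `A = {1 < |x| < 2} ⊂ ℝⁿ` with weight `|x|^{1−n}`, every
`C¹` function with constant boundary values `c₁, c₂` satisfies
`∫_A |x|^{1−n}|∇u| ≥ ω_{n−1}|c₂ − c₁|` (where `ω_{n−1} = n·vol(B₁)` is the measure of the
unit sphere), with equality for monotone radial functions. -/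
theorem stmt10 (n : ℕ) (hn : 2 ≤ n)
    (A : Set (EuclideanSpace ℝ (Fin n)))
    (hA : A = {x : EuclideanSpace ℝ (Fin n) | 1 < ‖x‖ ∧ ‖x‖ < 2})
    (ω : ℝ)
    (hω : ω = n * (volume (Metric.ball (0 : EuclideanSpace ℝ (Fin n)) 1)).toReal)
    (c₁ c₂ : ℝ) :
    (∀ u : EuclideanSpace ℝ (Fin n) → ℝ, ContDiffOn ℝ 1 u (closure A) →
      (∀ x, ‖x‖ = 1 → u x = c₁) → (∀ x, ‖x‖ = 2 → u x = c₂) →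
      ω * |c₂ - c₁| ≤ ∫ x in A, ‖x‖ ^ ((1:ℝ) - n) * ‖gradient u x‖) ∧
    (∀ g : ℝ → ℝ, ContDiff ℝ 1 g → (MonotoneOn g (Set.Icc 1 2) ∨ AntitoneOn g (Set.Icc 1 2)) →
      g 1 = c₁ → g 2 = c₂ →
      ∫ x in A, ‖x‖ ^ ((1:ℝ) - n) * ‖gradient (fun y : EuclideanSpace ℝ (Fin n) => g ‖y‖) x‖
        = ω * |c₂ - c₁|) := by
  constructor
  · intro u hu h1 h2
    exact part1 n hn A hA ω hω c₁ c₂ u hu h1 h2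
  · intro g hg hm hg1 hg2
    exact part2 n hn A hA ω hω c₁ c₂ g hg hm hg1 hg2
end
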